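/- arXiv:1702.04050 — 8 statements merged into one kernel-verified Lean document; each statement's English description precedes it below -/
import Mathlib

section
/- Let ζ_1,…,ζ_n be independent non-negative random variables and B, ε_0 ≥ 0. Assume that for each k and all ε ≥ ε_0, P(ζ_k < ε) ≤ Bε. Then there is an absolute constant C such that for all ε ≥ ε_0, P(∑_{k=1}^n ζ_k² < ε²n) ≤ (CBε)^n. -/
open MeasureTheory ProbabilityTheory Real
open scoped ENNReal Classical

noncomputable section

/-- `EucSp n` is Euclidean space `ℝ^n`. -/
abbrev EucSp (n : ℕ) := EuclideanSpace ℝ (Fin n)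

/-- Matrix-vector multiplication as a map between Euclidean spaces. -/
def mulVecE {N n : ℕ} (A : Matrix (Fin N) (Fin n) ℝ) (x : EucSp n) : EucSp N := WithLp.toLp 2 (A.mulVec x)

/-- Operator norm (`ℓ² → ℓ²`) of a rectangular matrix. -/
def opNormM {N n : ℕ} (A : Matrix (Fin N) (Fin n) ℝ) : ℝ :=
  ⨆ x : Metric.sphere (0 : EucSp n) 1, ‖mulVecE A x‖

/-- The set of `δn`-sparse vectors in `ℝ^n`. -/
def sparseVecs (n : ℕ) (δ : ℝ) : Set (EucSp n) :=
  {y | (Nat.card {i : Fin n // y i ≠ 0} : ℝ) ≤ δ * n}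

/-- Compressible unit vectors: within distance `ρ` of the `δn`-sparse vectors. -/
def compVecs (n : ℕ) (δ ρ : ℝ) : Set (EucSp n) :=
  {x | ‖x‖ = 1 ∧ Metric.infDist x (sparseVecs n δ) ≤ ρ}

/-- Incompressible unit vectors. -/
def incompVecs (n : ℕ) (δ ρ : ℝ) : Set (EucSp n) :=
  {x | ‖x‖ = 1 ∧ ρ < Metric.infDist x (sparseVecs n δ)}

def tensC₁ : ℝ := ∑' j : ℕ, ((j : ℝ) + 1) * Real.exp (-1) ^ j

lemma tensC₁_summable : Summable (fun j : ℕ => ((j : ℝ) + 1) * Real.exp (-1) ^ j) := by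
  have hr : ‖Real.exp (-1)‖ < 1 := by
    rw [Real.norm_eq_abs, abs_of_pos (Real.exp_pos _)]
    exact Real.exp_lt_one_iff.mpr (by norm_num)
  have h1 := summable_pow_mul_geometric_of_norm_lt_one (R := ℝ) 1 hr
  have h2 := summable_geometric_of_norm_lt_one hr
  have := h1.add h2
  refine this.congr fun j => ?_
  push_cast
  ring

lemma tensC₁_one_le : 1 ≤ tensC₁ := by
  have h := Summable.le_tsum tensC₁_summable 0 (fun j _ => by positivity)
  simpa [tensC₁] using h

/-- Key single-variable bound. -/
lemma tens_key {Ω : Type} [MeasurableSpace Ω] (μ : Measure Ω) [IsProbabilityMeasure μ]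
    (ζ : Ω → ℝ) (hm : Measurable ζ) (h0 : ∀ ω, 0 ≤ ζ ω) (B ε : ℝ) (hB : 0 ≤ B) (hε : 0 < ε)
    (hsb : ∀ j : ℕ, (μ {ω | ζ ω < ε * Real.sqrt (j + 1)}).toReal ≤ B * (ε * Real.sqrt (j + 1))) :
    ∫ ω, Real.exp (-(ε ^ 2)⁻¹ * ζ ω ^ 2) ∂μ ≤ tensC₁ * B * ε := by
  have hmf : Measurable fun ω => Real.exp (-(ε ^ 2)⁻¹ * ζ ω ^ 2) :=
    (((hm.pow_const 2).const_mul _).exp)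
  have hC₁ : (0:ℝ) ≤ tensC₁ := le_trans zero_le_one tensC₁_one_le
  rw [MeasureTheory.integral_eq_lintegral_of_nonneg_ae
      (Filter.Eventually.of_forall fun ω => (Real.exp_pos _).le) hmf.aestronglyMeasurable]
  refine ENNReal.toReal_le_of_le_ofReal (by positivity) ?_
  have hSmeas : ∀ j : ℕ, MeasurableSet {ω | ζ ω < ε * Real.sqrt (j + 1)} :=
    fun j => measurableSet_lt hm measurable_const
  calc ∫⁻ ω, ENNReal.ofReal (Real.exp (-(ε ^ 2)⁻¹ * ζ ω ^ 2)) ∂μ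
      ≤ ∫⁻ ω, ∑' j : ℕ, ({ω | ζ ω < ε * Real.sqrt (j + 1)}).indicator
          (fun _ => ENNReal.ofReal (Real.exp (-(j:ℝ)))) ω ∂μ := by
        refine lintegral_mono fun ω => ?_
        set x := ζ ω with hx
        have hx0 : 0 ≤ x := h0 ω
        set j₀ : ℕ := ⌊x ^ 2 / ε ^ 2⌋₊ with hj₀
        have hfl : (j₀ : ℝ) ≤ x ^ 2 / ε ^ 2 := Nat.floor_le (by positivity)
        have hfl2 : x ^ 2 / ε ^ 2 < (j₀ : ℝ) + 1 := Nat.lt_floor_add_one _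
        have hmem : ω ∈ {ω | ζ ω < ε * Real.sqrt (j₀ + 1)} := by
          have hx2 : x ^ 2 < ε ^ 2 * ((j₀ : ℝ) + 1) := by
            have := (div_lt_iff₀ (by positivity : (0:ℝ) < ε ^ 2)).mp hfl2
            linarith
          have : x < ε * Real.sqrt ((j₀ : ℝ) + 1) := by
            have h1 : Real.sqrt (x ^ 2) < Real.sqrt (ε ^ 2 * ((j₀ : ℝ) + 1)) := by
              refine Real.sqrt_lt_sqrt (by positivity) hx2
            rwa [Real.sqrt_sq hx0, Real.sqrt_mul (by positivity), Real.sqrt_sq hε.le] at h1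
          exact this
        have hexp : Real.exp (-(ε ^ 2)⁻¹ * x ^ 2) ≤ Real.exp (-(j₀:ℝ)) := by
          apply Real.exp_le_exp.mpr
          have : (j₀ : ℝ) ≤ x ^ 2 * (ε ^ 2)⁻¹ := by
            rwa [div_eq_mul_inv] at hfl
          nlinarith
        refine le_trans ?_ (ENNReal.le_tsum j₀)
        rw [Set.indicator_of_mem hmem]
        exact ENNReal.ofReal_le_ofReal hexp
    _ = ∑' j : ℕ, ∫⁻ ω, ({ω | ζ ω < ε * Real.sqrt (j + 1)}).indicator
          (fun _ => ENNReal.ofReal (Real.exp (-(j:ℝ)))) ω ∂μ := by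
        exact lintegral_tsum fun j =>
          ((measurable_const.indicator (hSmeas j)).aemeasurable)
    _ = ∑' j : ℕ, ENNReal.ofReal (Real.exp (-(j:ℝ))) * μ {ω | ζ ω < ε * Real.sqrt (j + 1)} := by
        refine tsum_congr fun j => ?_
        rw [lintegral_indicator (hSmeas j)]
        simp
    _ ≤ ∑' j : ℕ, ENNReal.ofReal (((j:ℝ) + 1) * Real.exp (-1) ^ j * (B * ε)) := by
        refine ENNReal.tsum_le_tsum fun j => ?_
        have hμ : μ {ω | ζ ω < ε * Real.sqrt (j + 1)}
            ≤ ENNReal.ofReal (B * (ε * Real.sqrt (j + 1))) := by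
          rw [← ENNReal.ofReal_toReal (measure_ne_top μ _)]
          exact ENNReal.ofReal_le_ofReal (hsb j)
        calc ENNReal.ofReal (Real.exp (-(j:ℝ))) * μ {ω | ζ ω < ε * Real.sqrt (j + 1)}
            ≤ ENNReal.ofReal (Real.exp (-(j:ℝ))) * ENNReal.ofReal (B * (ε * Real.sqrt (j + 1))) :=
              mul_le_mul_right hμ _
          _ = ENNReal.ofReal (Real.exp (-(j:ℝ)) * (B * (ε * Real.sqrt (j + 1)))) := by
              rw [← ENNReal.ofReal_mul (Real.exp_pos _).le]
          _ ≤ ENNReal.ofReal (((j:ℝ) + 1) * Real.exp (-1) ^ j * (B * ε)) := by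
              refine ENNReal.ofReal_le_ofReal ?_
              have hsq : Real.sqrt ((j:ℝ) + 1) ≤ (j:ℝ) + 1 := by
                have : Real.sqrt ((j:ℝ) + 1) ≤ Real.sqrt (((j:ℝ) + 1) ^ 2) :=
                  Real.sqrt_le_sqrt (by nlinarith [Nat.cast_nonneg (α := ℝ) j])
                rwa [Real.sqrt_sq (by positivity)] at this
              have hexpj : Real.exp (-(j:ℝ)) = Real.exp (-1) ^ j := by
                rw [← Real.exp_nat_mul]; ring_nf
              rw [hexpj]
              have h1 : Real.exp (-1) ^ j * (B * (ε * Real.sqrt ((j:ℝ) + 1)))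
                  ≤ Real.exp (-1) ^ j * (B * (ε * ((j:ℝ) + 1))) := by
                have := mul_le_mul_of_nonneg_left hsq (by positivity : (0:ℝ) ≤ ε)
                have := mul_le_mul_of_nonneg_left this hB
                exact mul_le_mul_of_nonneg_left this (by positivity)
              calc Real.exp (-1) ^ j * (B * (ε * Real.sqrt ((j:ℝ) + 1)))
                  ≤ Real.exp (-1) ^ j * (B * (ε * ((j:ℝ) + 1))) := h1
                _ = ((j:ℝ) + 1) * Real.exp (-1) ^ j * (B * ε) := by ring
    _ = ENNReal.ofReal (∑' j : ℕ, ((j:ℝ) + 1) * Real.exp (-1) ^ j * (B * ε)) := by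
        refine (ENNReal.ofReal_tsum_of_nonneg (fun j => by positivity) ?_).symm
        exact tensC₁_summable.mul_right _
    _ = ENNReal.ofReal (tensC₁ * B * ε) := by
        rw [tsum_mul_right, tensC₁, mul_assoc]

/-- Tensorization of small-ball probabilities (linear bound). -/
theorem stmt0 :
    ∃ C : ℝ, 0 < C ∧
      ∀ (Ω : Type) (_ : MeasurableSpace Ω) (μ : Measure Ω), IsProbabilityMeasure μ →
      ∀ (n : ℕ) (ζ : Fin n → Ω → ℝ) (B ε₀ : ℝ),
        0 ≤ B → 0 ≤ ε₀ →
        (∀ k, Measurable (ζ k)) →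
        iIndepFun ζ μ →
        (∀ k ω, 0 ≤ ζ k ω) →
        (∀ k ε, ε₀ ≤ ε → (μ {ω | ζ k ω < ε}).toReal ≤ B * ε) →
        ∀ ε, ε₀ ≤ ε →
          (μ {ω | ∑ k, (ζ k ω) ^ 2 < ε ^ 2 * n}).toReal ≤ (C * B * ε) ^ n := by
  refine ⟨Real.exp 1 * tensC₁, mul_pos (Real.exp_pos 1) (lt_of_lt_of_le one_pos tensC₁_one_le), ?_⟩
  intro Ω _ μ hμ n ζ B ε₀ hB hε₀ hmeas hind hpos hsmall ε hε₀ε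
  have hC₁0 : (0:ℝ) ≤ tensC₁ := le_trans zero_le_one tensC₁_one_le
  rcases Nat.eq_zero_or_pos n with hn | hn
  · subst hn
    simp
  rcases eq_or_lt_of_le (le_trans hε₀ hε₀ε) with hε | hε
  · -- ε = 0
    have hset : {ω | ∑ k, (ζ k ω) ^ 2 < ε ^ 2 * n} = ∅ := by
      ext ω
      simp only [Set.mem_setOf_eq, Set.mem_empty_iff_false, iff_false, not_lt, ← hε]
      have hs : (0:ℝ) ≤ ∑ k, ζ k ω ^ 2 := Finset.sum_nonneg fun k _ => sq_nonneg _
      nlinarith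
    rw [hset]
    simp only [measure_empty, ENNReal.toReal_zero, ← hε]
    rw [mul_zero, zero_pow hn.ne']
  -- main case ε > 0
  set t : ℝ := -(ε ^ 2)⁻¹ with ht
  have ht0 : t ≤ 0 := neg_nonpos.mpr (by positivity)
  set X : Fin n → Ω → ℝ := fun k ω => ζ k ω ^ 2 with hX
  have hXm : ∀ k, Measurable (X k) := fun k => (hmeas k).pow_const 2
  have hXind : iIndepFun X μ := by
    exact hind.comp (fun k (x : ℝ) => x ^ 2) (fun k => measurable_id.pow_const 2)
  have hint : ∀ k, Integrable (fun ω => Real.exp (t * X k ω)) μ := by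
    intro k
    refine (integrable_const (1:ℝ)).mono' (((hXm k).const_mul t).exp).aestronglyMeasurable ?_
    refine Filter.Eventually.of_forall fun ω => ?_
    rw [Real.norm_eq_abs, abs_of_pos (Real.exp_pos _)]
    refine Real.exp_le_one_iff.mpr ?_
    have h1 : 0 ≤ X k ω := sq_nonneg _
    have h2 : 0 ≤ (ε ^ 2)⁻¹ := by positivity
    rw [ht]; nlinarith
  have hintsum : Integrable (fun ω => Real.exp (t * (∑ k, X k) ω)) μ :=
    hXind.integrable_exp_mul_sum hXm (fun k _ => hint k)
  have step1 : (μ {ω | ∑ k, (ζ k ω) ^ 2 < ε ^ 2 * n}).toReal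
      ≤ (μ {ω | (∑ k, X k) ω ≤ ε ^ 2 * n}).toReal := by
    refine ENNReal.toReal_mono (measure_ne_top μ _) (measure_mono fun ω hω => ?_)
    simp only [Set.mem_setOf_eq, Finset.sum_apply] at *
    exact hω.le
  have step2 := measure_le_le_exp_mul_mgf (μ := μ) (X := ∑ k, X k) (ε ^ 2 * n) ht0 hintsum
  have hmgfsum : mgf (∑ k, X k) μ t = ∏ k, mgf (X k) μ t := hXind.mgf_sum hXm Finset.univ
  have hmgfk : ∀ k, mgf (X k) μ t ≤ tensC₁ * B * ε := by
    intro k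
    have hsb : ∀ j : ℕ, (μ {ω | ζ k ω < ε * Real.sqrt (j + 1)}).toReal
        ≤ B * (ε * Real.sqrt (j + 1)) := by
      intro j
      refine hsmall k _ (le_trans hε₀ε ?_)
      have h1 : (1:ℝ) ≤ Real.sqrt ((j:ℝ) + 1) := by
        nlinarith [Real.sq_sqrt (show (0:ℝ) ≤ (j:ℝ) + 1 by positivity),
          Real.sqrt_nonneg ((j:ℝ) + 1), Nat.cast_nonneg (α := ℝ) j]
      nlinarith
    have := tens_key μ (ζ k) (hmeas k) (hpos k) B ε hB hε hsb
    refine le_trans (le_of_eq ?_) this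
    rw [mgf]
  have hexpn : Real.exp (-t * (ε ^ 2 * n)) = Real.exp 1 ^ n := by
    rw [← Real.exp_nat_mul]
    congr 1
    rw [ht]
    field_simp
  have hprod : ∏ k : Fin n, mgf (X k) μ t ≤ (tensC₁ * B * ε) ^ n := by
    calc ∏ k : Fin n, mgf (X k) μ t ≤ ∏ _k : Fin n, (tensC₁ * B * ε) :=
          Finset.prod_le_prod (fun k _ => mgf_nonneg) (fun k _ => hmgfk k)
      _ = (tensC₁ * B * ε) ^ n := by simp
  calc (μ {ω | ∑ k, (ζ k ω) ^ 2 < ε ^ 2 * n}).toReal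
      ≤ (μ {ω | (∑ k, X k) ω ≤ ε ^ 2 * n}).toReal := step1
    _ ≤ Real.exp (-t * (ε ^ 2 * n)) * mgf (∑ k, X k) μ t := step2
    _ ≤ Real.exp 1 ^ n * (tensC₁ * B * ε) ^ n := by
        rw [hexpn, hmgfsum]
        exact mul_le_mul_of_nonneg_left hprod (by positivity)
    _ = (Real.exp 1 * tensC₁ * B * ε) ^ n := by
        rw [← mul_pow]
        ring_nf
end
end

section
/- Let ζ_1,…,ζ_n be independent non-negative random variables. Assume there exist λ > 0 and μ ∈ (0,1) such that P(ζ_k < λ) ≤ μ for each k. Then there exist λ_1 > 0 and μ_1 ∈ (0,1), depending only on λ and μ, such that P(∑_{k=1}^n ζ_k² < λ_1 n) ≤ μ_1^n. -/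
open MeasureTheory ProbabilityTheory Real
open scoped ENNReal Classical

noncomputable section

/-- Tensorization of small-ball probabilities (one-point bound). -/
theorem stmt1 (lam μ₀ : ℝ) (hlam : 0 < lam) (hμ₀ : μ₀ ∈ Set.Ioo (0:ℝ) 1) :
    ∃ lam₁ μ₁ : ℝ, 0 < lam₁ ∧ μ₁ ∈ Set.Ioo (0:ℝ) 1 ∧
      ∀ (Ω : Type) (_ : MeasurableSpace Ω) (μ : Measure Ω), IsProbabilityMeasure μ →
      ∀ (n : ℕ) (ζ : Fin n → Ω → ℝ),
        (∀ k, Measurable (ζ k)) →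
        iIndepFun ζ μ →
        (∀ k ω, 0 ≤ ζ k ω) →
        (∀ k, (μ {ω | ζ k ω < lam}).toReal ≤ μ₀) →
        (μ {ω | ∑ k, (ζ k ω) ^ 2 < lam₁ * n}).toReal ≤ μ₁ ^ n := by
  obtain ⟨hμ₀0, hμ₀1⟩ := hμ₀
  set s : ℝ := Real.log (2 / (1 - μ₀)) / lam ^ 2 with hs_def
  have h2 : (1:ℝ) < 2 / (1 - μ₀) := by
    rw [lt_div_iff₀ (by linarith)]; linarith
  have hs : 0 < s := div_pos (Real.log_pos h2) (by positivity)
  set b : ℝ := (1 + μ₀) / 2 with hb_def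
  have hb0 : 0 < b := by rw [hb_def]; linarith
  have hb1 : b < 1 := by rw [hb_def]; linarith
  have hexp : Real.exp (-s * lam ^ 2) = (1 - μ₀) / 2 := by
    rw [hs_def, neg_mul, div_mul_cancel₀ _ (by positivity : (lam:ℝ)^2 ≠ 0),
      Real.exp_neg, Real.exp_log (by linarith), inv_div]
  set lam₁ : ℝ := -Real.log b / (2 * s) with hlam₁_def
  have hlam₁ : 0 < lam₁ := by
    apply div_pos _ (by positivity)
    simpa using Real.log_neg hb0 hb1
  set μ₁ : ℝ := Real.exp (s * lam₁) * b with hμ₁_def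
  have hμ₁0 : 0 < μ₁ := by positivity
  have hμ₁1 : μ₁ < 1 := by
    have h1 : s * lam₁ = -Real.log b / 2 := by
      rw [hlam₁_def]; field_simp
    have : Real.exp (s * lam₁) < Real.exp (-Real.log b) := by
      apply Real.exp_lt_exp.2
      rw [h1]
      have : 0 < -Real.log b := by simpa using Real.log_neg hb0 hb1
      linarith
    rw [Real.exp_neg, Real.exp_log hb0] at this
    calc μ₁ < b⁻¹ * b := by rw [hμ₁_def]; exact mul_lt_mul_of_pos_right this hb0
    _ = 1 := inv_mul_cancel₀ hb0.ne'
  refine ⟨lam₁, μ₁, hlam₁, ⟨hμ₁0, hμ₁1⟩, ?_⟩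
  intro Ω mΩ μ hprob n ζ hmeas hindep hnonneg hsmall
  -- squared variables
  set X : Fin n → Ω → ℝ := fun k ω => (ζ k ω) ^ 2 with hX_def
  have hXmeas : ∀ k, Measurable (X k) := fun k => (hmeas k).pow_const 2
  have hXindep : iIndepFun X μ := by
    exact hindep.comp (fun _ x => x ^ 2) (fun _ => measurable_id.pow_const 2)
  have hint : Integrable (fun ω => Real.exp (-s * ∑ k, X k ω)) μ := by
    refine ⟨((Finset.univ.measurable_sum fun k _ => hXmeas k).const_mul
      (-s)).exp.aestronglyMeasurable, ?_⟩
    apply HasFiniteIntegral.of_bounded (C := 1)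
    filter_upwards with ω
    rw [Real.norm_eq_abs, abs_of_pos (Real.exp_pos _), ← Real.exp_zero]
    apply Real.exp_le_exp.2
    have h1 : 0 ≤ ∑ k, X k ω := Finset.sum_nonneg fun k _ => sq_nonneg _
    rw [neg_mul]
    exact neg_nonpos.2 (mul_nonneg hs.le h1)
  -- Chernoff
  have hsub : {ω | ∑ k, (ζ k ω) ^ 2 < lam₁ * n} ⊆ {ω | (∑ k, X k ω) ≤ lam₁ * n} := by
    intro ω hω
    simp only [Set.mem_setOf_eq] at hω ⊢
    exact hω.le
  have hmono : (μ {ω | ∑ k, (ζ k ω) ^ 2 < lam₁ * n}).toReal ≤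
      (μ {ω | (∑ k, X k ω) ≤ lam₁ * n}).toReal := by
    apply ENNReal.toReal_mono (measure_ne_top μ _) (measure_mono hsub)
  have hcher := measure_le_le_exp_mul_mgf (μ := μ) (X := fun ω => ∑ k, X k ω)
    (t := -s) (lam₁ * n) (by linarith) hint
  have hmgf_sum : mgf (fun ω => ∑ k, X k ω) μ (-s) = ∏ k, mgf (X k) μ (-s) := by
    have := hXindep.mgf_sum (t := -s) hXmeas Finset.univ
    convert this using 2
    ext ω
    simp [Finset.sum_apply]
  -- per-coordinate bound
  have hone : ∀ k, mgf (X k) μ (-s) ≤ b := by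
    intro k
    have hint1 : Integrable (fun ω => Real.exp (-s * X k ω)) μ := by
      refine ⟨(((hXmeas k).const_mul (-s)).exp).aestronglyMeasurable, ?_⟩
      apply HasFiniteIntegral.of_bounded (C := 1)
      filter_upwards with ω
      rw [Real.norm_eq_abs, abs_of_pos (Real.exp_pos _), ← Real.exp_zero]
      apply Real.exp_le_exp.2
      have h1 : 0 ≤ X k ω := sq_nonneg (ζ k ω)
      rw [neg_mul]
      exact neg_nonpos.2 (mul_nonneg hs.le h1)
    have hint2 : Integrable (fun ω =>
        Set.indicator {ω | ζ k ω < lam} (fun _ => (1:ℝ)) ω + Real.exp (-s * lam ^ 2)) μ := by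
      apply Integrable.add _ (integrable_const _)
      exact (integrable_const (1:ℝ)).indicator (measurableSet_lt (hmeas k) measurable_const)
    have hle : ∀ ω, Real.exp (-s * X k ω) ≤
        Set.indicator {ω | ζ k ω < lam} (fun _ => (1:ℝ)) ω + Real.exp (-s * lam ^ 2) := by
      intro ω
      by_cases h : ζ k ω < lam
      · rw [Set.indicator_of_mem (show ω ∈ {ω | ζ k ω < lam} from h)]
        have : Real.exp (-s * X k ω) ≤ 1 := by
          rw [← Real.exp_zero]
          apply Real.exp_le_exp.2
          have h1 : 0 ≤ X k ω := sq_nonneg (ζ k ω)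
          rw [neg_mul]
          exact neg_nonpos.2 (mul_nonneg hs.le h1)
        have := Real.exp_pos (-s * lam ^ 2)
        linarith
      · rw [Set.indicator_of_notMem (show ω ∉ {ω | ζ k ω < lam} from h)]
        push_neg at h
        have h2 : lam ^ 2 ≤ X k ω := by
          show lam ^ 2 ≤ ζ k ω ^ 2
          exact pow_le_pow_left₀ hlam.le h 2
        simp only [zero_add]
        apply Real.exp_le_exp.2
        simp only [neg_mul, neg_le_neg_iff]
        exact mul_le_mul_of_nonneg_left h2 hs.le
    have := integral_mono hint1 hint2 hle
    have heq : ∫ ω, (Set.indicator {ω | ζ k ω < lam} (fun _ => (1:ℝ)) ω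
        + Real.exp (-s * lam ^ 2)) ∂μ
        = (μ {ω | ζ k ω < lam}).toReal + Real.exp (-s * lam ^ 2) := by
      have hset : MeasurableSet {ω | ζ k ω < lam} := measurableSet_lt (hmeas k) measurable_const
      rw [integral_add ((integrable_const (1:ℝ)).indicator hset) (integrable_const _),
        integral_indicator_const _ hset, integral_const]
      simp [smul_eq_mul, Measure.real]
    rw [heq] at this
    calc mgf (X k) μ (-s) = ∫ ω, Real.exp (-s * X k ω) ∂μ := rfl
      _ ≤ (μ {ω | ζ k ω < lam}).toReal + Real.exp (-s * lam ^ 2) := this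
      _ ≤ μ₀ + (1 - μ₀) / 2 := by rw [hexp]; linarith [hsmall k]
      _ = b := by rw [hb_def]; ring
  have hprod : ∏ k, mgf (X k) μ (-s) ≤ b ^ n := by
    calc ∏ k : Fin n, mgf (X k) μ (-s) ≤ ∏ _k : Fin n, b := by
          apply Finset.prod_le_prod
          · intro k _; exact mgf_nonneg
          · intro k _; exact hone k
      _ = b ^ n := by simp
  calc (μ {ω | ∑ k, (ζ k ω) ^ 2 < lam₁ * n}).toReal
      ≤ (μ {ω | (∑ k, X k ω) ≤ lam₁ * n}).toReal := hmono
    _ ≤ Real.exp (-(-s) * (lam₁ * n)) * mgf (fun ω => ∑ k, X k ω) μ (-s) := hcher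
    _ ≤ Real.exp (s * (lam₁ * n)) * b ^ n := by
        rw [neg_neg, hmgf_sum]
        exact mul_le_mul_of_nonneg_left hprod (Real.exp_pos _).le
    _ = μ₁ ^ n := by
        rw [hμ₁_def, mul_pow, ← Real.exp_nat_mul]
        ring_nf
end
end

section
/- Let δ, ρ ∈ (0,1] and let x ∈ S^{n-1} be incompressible, i.e. its Euclidean distance to the set of δn-sparse vectors exceeds ρ. Then there exists a set σ ⊆ {1,…,n} of cardinality |σ| ≥ (1/2)ρ²δn such that ρ/√(2n) ≤ |x_k| ≤ 1/√(δn) for all k ∈ σ. -/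
open MeasureTheory ProbabilityTheory Real
open scoped ENNReal Classical

noncomputable section

/-- Incompressible vectors are spread: many coordinates of comparable magnitude. -/
theorem stmt6 (n : ℕ) (δ ρ : ℝ) (hδ : δ ∈ Set.Ioc (0:ℝ) 1) (hρ : ρ ∈ Set.Ioc (0:ℝ) 1)
    (x : EucSp n) (hx : x ∈ incompVecs n δ ρ) :
    ∃ σ : Finset (Fin n), (1/2) * ρ ^ 2 * δ * n ≤ (σ.card : ℝ) ∧
      ∀ k ∈ σ, ρ / Real.sqrt (2 * n) ≤ |x k| ∧ |x k| ≤ 1 / Real.sqrt (δ * n) := by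
  obtain ⟨hδ0, hδ1⟩ := hδ
  obtain ⟨hρ0, hρ1⟩ := hρ
  obtain ⟨hx1, hxd⟩ := hx
  have hn : 0 < n := by
    rcases Nat.eq_zero_or_pos n with h | h
    · exfalso; subst h
      have hx0 : x = 0 := Subsingleton.elim x 0
      rw [hx0, norm_zero] at hx1; norm_num at hx1
    · exact h
  have hnR : (0:ℝ) < n := Nat.cast_pos.mpr hn
  have ha : (0:ℝ) < δ * n := mul_pos hδ0 hnR
  have hb : (0:ℝ) < 2 * n := by positivity
  have hsum : ∑ i, x i ^ 2 = 1 := by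
    have h := hx1
    rw [EuclideanSpace.norm_eq] at h
    have h2 := congrArg (· ^ 2) h
    simp only [one_pow] at h2
    rw [Real.sq_sqrt (by positivity)] at h2
    simpa [Real.norm_eq_abs, sq_abs] using h2
  set A : Finset (Fin n) := Finset.univ.filter (fun k => 1 / Real.sqrt (δ * n) < |x k|) with hA
  set σ : Finset (Fin n) := Finset.univ.filter
    (fun k => ρ / Real.sqrt (2 * n) ≤ |x k| ∧ |x k| ≤ 1 / Real.sqrt (δ * n)) with hσ
  have hAterm : ∀ k ∈ A, 1 / (δ * n) ≤ x k ^ 2 := by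
    intro k hk
    rw [hA, Finset.mem_filter] at hk
    have h1 : 1 / Real.sqrt (δ * n) ≤ |x k| := le_of_lt hk.2
    have h2 := pow_le_pow_left₀ (by positivity) h1 2
    calc 1/(δ*n) = (1/Real.sqrt (δ*n))^2 := by
            rw [div_pow, one_pow, Real.sq_sqrt ha.le]
      _ ≤ |x k|^2 := h2
      _ = x k ^ 2 := sq_abs _
  have hAsum : (A.card : ℝ) * (1/(δ*n)) ≤ ∑ k ∈ A, x k ^ 2 := by
    calc (A.card : ℝ) * (1/(δ*n)) = ∑ _k ∈ A, 1/(δ*n) := by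
          rw [Finset.sum_const, nsmul_eq_mul]
      _ ≤ _ := Finset.sum_le_sum hAterm
  have hApart : ∑ k ∈ A, x k ^ 2 ≤ 1 := by
    rw [← hsum]
    exact Finset.sum_le_sum_of_subset_of_nonneg (Finset.subset_univ A)
      (fun i _ _ => sq_nonneg _)
  have hAcard : (A.card : ℝ) ≤ δ * n := by
    have h := hAsum.trans hApart
    rw [mul_one_div, div_le_one ha] at h
    exact h
  set y : EucSp n := WithLp.toLp 2 (fun k => if k ∈ A then x k else 0) with hy
  have hymem : y ∈ sparseVecs n δ := by
    rw [sparseVecs]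
    have hcard : Nat.card {i : Fin n // y i ≠ 0} ≤ A.card := by
      rw [Nat.card_eq_fintype_card, Fintype.card_subtype]
      apply Finset.card_le_card
      intro i hi
      rw [Finset.mem_filter] at hi
      by_contra h
      exact hi.2 (by simp [hy, if_neg h])
    calc (Nat.card {i : Fin n // y i ≠ 0} : ℝ) ≤ A.card := Nat.cast_le.mpr hcard
      _ ≤ δ * n := hAcard
  have hdist : ρ < dist x y := lt_of_lt_of_le hxd (Metric.infDist_le_dist_of_mem hymem)
  have hdist2 : ρ ^ 2 < ∑ k ∈ Aᶜ, x k ^ 2 := by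
    have h1 : dist x y = Real.sqrt (∑ i, (x i - y i)^2) := by
      rw [EuclideanSpace.dist_eq]
      congr 1
      refine Finset.sum_congr rfl fun i _ => ?_
      rw [Real.dist_eq, sq_abs]
    have h2 : ∑ i, (x i - y i)^2 = ∑ k ∈ Aᶜ, x k ^ 2 := by
      rw [← Finset.sum_add_sum_compl A]
      have hA0 : ∑ i ∈ A, (x i - y i)^2 = 0 :=
        Finset.sum_eq_zero (fun i hi => by simp [hy, if_pos hi])
      rw [hA0, zero_add]
      refine Finset.sum_congr rfl fun i hi => ?_
      rw [Finset.mem_compl] at hi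
      simp [hy, if_neg hi]
    have h3 : ρ < Real.sqrt (∑ k ∈ Aᶜ, x k ^ 2) := by rw [← h2, ← h1]; exact hdist
    have h4 := pow_lt_pow_left₀ h3 hρ0.le (by norm_num : 2 ≠ 0)
    calc ρ^2 < (Real.sqrt (∑ k ∈ Aᶜ, x k ^ 2))^2 := h4
      _ = _ := Real.sq_sqrt (Finset.sum_nonneg fun i _ => sq_nonneg _)
  set B : Finset (Fin n) := Aᶜ.filter (fun k => |x k| < ρ / Real.sqrt (2 * n)) with hB
  have hσeq : σ = Aᶜ.filter (fun k => ρ / Real.sqrt (2*n) ≤ |x k|) := by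
    ext k
    simp only [hσ, hA, Finset.mem_filter, Finset.mem_compl, Finset.mem_univ, true_and, not_lt]
    tauto
  have hsplit : ∑ k ∈ Aᶜ, x k ^ 2 = ∑ k ∈ σ, x k ^ 2 + ∑ k ∈ B, x k ^ 2 := by
    rw [hσeq, hB,
      ← Finset.sum_filter_add_sum_filter_not Aᶜ (fun k => ρ / Real.sqrt (2*n) ≤ |x k|)
        (fun k => x k ^ 2)]
    congr 1
    refine Finset.sum_congr ?_ (fun _ _ => rfl)
    ext k; simp [not_le]
  have hBsum : ∑ k ∈ B, x k ^ 2 ≤ ρ^2 / 2 := by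
    have h1 : ∀ k ∈ B, x k ^ 2 ≤ ρ^2/(2*n) := by
      intro k hk
      rw [hB, Finset.mem_filter] at hk
      have h := pow_le_pow_left₀ (abs_nonneg _) hk.2.le 2
      rwa [sq_abs, div_pow, Real.sq_sqrt hb.le] at h
    have hBcard : (B.card : ℝ) ≤ n := by
      exact_mod_cast (Finset.card_le_univ B).trans_eq (Fintype.card_fin n)
    calc ∑ k ∈ B, x k ^ 2 ≤ ∑ _k ∈ B, ρ^2/(2*n) := Finset.sum_le_sum h1
      _ = B.card * (ρ^2/(2*n)) := by rw [Finset.sum_const, nsmul_eq_mul]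
      _ ≤ n * (ρ^2/(2*n)) := mul_le_mul_of_nonneg_right hBcard (by positivity)
      _ = ρ^2/2 := by field_simp
  have hσsum : ∑ k ∈ σ, x k ^ 2 ≤ σ.card * (1/(δ*n)) := by
    have h1 : ∀ k ∈ σ, x k ^ 2 ≤ 1/(δ*n) := by
      intro k hk
      rw [hσ, Finset.mem_filter] at hk
      have h := pow_le_pow_left₀ (abs_nonneg _) hk.2.2 2
      rwa [sq_abs, div_pow, one_pow, Real.sq_sqrt ha.le] at h
    calc ∑ k ∈ σ, x k ^ 2 ≤ ∑ _k ∈ σ, 1/(δ*n) := Finset.sum_le_sum h1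
      _ = σ.card * (1/(δ*n)) := by rw [Finset.sum_const, nsmul_eq_mul]
  refine ⟨σ, ?_, ?_⟩
  · have h1 : ρ^2/2 < ∑ k ∈ σ, x k ^ 2 := by
      rw [hsplit] at hdist2; linarith
    have h2 : ρ^2/2 < σ.card * (1/(δ*n)) := h1.trans_le hσsum
    rw [mul_one_div, lt_div_iff₀ ha] at h2
    have h3 : (1/2) * ρ^2 * δ * (n:ℝ) = ρ^2/2 * (δ*(n:ℝ)) := by ring
    linarith
  · intro k hk
    rw [hσ, Finset.mem_filter] at hk
    exact hk.2
end
end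

section
/- Let x ∈ S^{n-1} be an incompressible vector with parameters (δ, ρ), and let σ ⊆ {1,…,n} be a subset of cardinality at least (1/2)ρ²δn on which ρ/√(2n) ≤ |x_k| ≤ 1/√(δn). Then ‖P_σ x‖_2 ≥ (1/2)ρ²√δ and (‖P_σ x‖_3 / ‖P_σ x‖_2)³ ≤ 2/(ρ²δ√n), where P_σ is the coordinate projection onto ℝ^σ. -/
open MeasureTheory ProbabilityTheory Real
open scoped ENNReal Classical

noncomputable section

/-- Bounds for the coordinate projection of an incompressible vector onto a spread set `σ`. -/
theorem stmt7 (n : ℕ) (hn : 1 ≤ n) (δ ρ : ℝ)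
    (hδ : δ ∈ Set.Ioc (0:ℝ) 1) (hρ : ρ ∈ Set.Ioc (0:ℝ) 1)
    (x : EucSp n) (hx : x ∈ incompVecs n δ ρ)
    (σ : Finset (Fin n)) (hcard : (1/2) * ρ ^ 2 * δ * n ≤ (σ.card : ℝ))
    (hσ : ∀ k ∈ σ, ρ / Real.sqrt (2 * n) ≤ |x k| ∧ |x k| ≤ 1 / Real.sqrt (δ * n)) :
    ρ ^ 2 * Real.sqrt δ / 2 ≤ Real.sqrt (∑ k ∈ σ, (x k) ^ 2) ∧
      ((∑ k ∈ σ, |x k| ^ 3) ^ ((1:ℝ)/3) / Real.sqrt (∑ k ∈ σ, (x k) ^ 2)) ^ 3 ≤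
        2 / (ρ ^ 2 * δ * Real.sqrt n) := by

  obtain ⟨hδ0, hδ1⟩ := hδ
  obtain ⟨hρ0, hρ1⟩ := hρ
  have hn0 : (0:ℝ) < n := by exact_mod_cast hn
  set S2 := ∑ k ∈ σ, (x k)^2 with hS2
  set S3 := ∑ k ∈ σ, |x k|^3 with hS3
  have hterm : ∀ k ∈ σ, ρ^2/(2*n) ≤ (x k)^2 := by
    intro k hk
    have h := (hσ k hk).1
    have h2 : (ρ / Real.sqrt (2*n))^2 ≤ |x k|^2 :=
      pow_le_pow_left₀ (by positivity) h 2
    rwa [div_pow, Real.sq_sqrt (by positivity), sq_abs] at h2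
  have hS2lb : ρ^4*δ/4 ≤ S2 := by
    have h1 : (σ.card : ℝ) * (ρ^2/(2*n)) ≤ S2 := by
      rw [hS2]
      calc (σ.card:ℝ) * (ρ^2/(2*n)) = ∑ _k ∈ σ, ρ^2/(2*n) := by
            rw [Finset.sum_const, nsmul_eq_mul]
        _ ≤ _ := Finset.sum_le_sum hterm
    calc ρ^4*δ/4 = (1/2*ρ^2*δ*n) * (ρ^2/(2*n)) := by field_simp; ring
      _ ≤ (σ.card:ℝ) * (ρ^2/(2*n)) :=
          mul_le_mul_of_nonneg_right hcard (by positivity)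
      _ ≤ S2 := h1
  have hS2pos : 0 < S2 := lt_of_lt_of_le (by positivity) hS2lb
  have hsqpos : 0 < Real.sqrt S2 := Real.sqrt_pos.mpr hS2pos
  have hfirst : ρ ^ 2 * Real.sqrt δ / 2 ≤ Real.sqrt S2 := by
    have hsd : Real.sqrt δ ^ 2 = δ := Real.sq_sqrt hδ0.le
    have he : ρ ^ 2 * Real.sqrt δ / 2 = Real.sqrt (ρ^4*δ/4) := by
      rw [show ρ^4*δ/4 = (ρ^2*Real.sqrt δ/2)^2 from by linear_combination (-(ρ^4/4)) * hsd]
      rw [Real.sqrt_sq (by positivity)]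
    rw [he]
    exact Real.sqrt_le_sqrt hS2lb
  refine ⟨hfirst, ?_⟩
  have hS3nn : 0 ≤ S3 := Finset.sum_nonneg fun k _ => by positivity
  have hS3ub : S3 ≤ S2 / Real.sqrt (δ*n) := by
    rw [div_eq_mul_inv, hS2, Finset.sum_mul]
    apply Finset.sum_le_sum
    intro k hk
    have h := (hσ k hk).2
    have hxk2 : (0:ℝ) ≤ (x k)^2 := sq_nonneg _
    calc |x k|^3 = |x k| * (x k)^2 := by rw [pow_succ, sq_abs]; ring
      _ ≤ (1 / Real.sqrt (δ*n)) * (x k)^2 := mul_le_mul_of_nonneg_right h hxk2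
      _ = (x k)^2 * (Real.sqrt (δ*n))⁻¹ := by ring
  rw [div_pow]
  have h1 : ((S3 : ℝ) ^ ((1:ℝ)/3))^3 = S3 := by
    rw [← Real.rpow_natCast (S3 ^ ((1:ℝ)/3)) 3, ← Real.rpow_mul hS3nn]
    norm_num
  rw [h1, div_le_div_iff₀ (by positivity) (by positivity)]
  have hcube : Real.sqrt S2 ^ 3 = S2 * Real.sqrt S2 := by
    have := Real.sq_sqrt hS2pos.le
    nlinarith [this]
  calc S3 * (ρ^2*δ*Real.sqrt n)
      ≤ (S2/Real.sqrt (δ*n)) * (ρ^2*δ*Real.sqrt n) :=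
        mul_le_mul_of_nonneg_right hS3ub (by positivity)
    _ = S2 * (ρ^2 * Real.sqrt δ) := by
        have hsd : Real.sqrt δ ^ 2 = δ := Real.sq_sqrt hδ0.le
        have h1 : Real.sqrt δ ≠ 0 := by positivity
        have h2 : Real.sqrt (n:ℝ) ≠ 0 := by positivity
        rw [Real.sqrt_mul hδ0.le]
        field_simp
        linear_combination (-1) * hsd
    _ ≤ S2 * (2 * Real.sqrt S2) := by
        apply mul_le_mul_of_nonneg_left _ hS2pos.le
        linarith
    _ = 2 * Real.sqrt S2 ^ 3 := by rw [hcube]; ring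
end
end

section
/- Let x ∈ Incomp_n(δ, ρ) be an incompressible unit vector, let m ≤ min{d, ⌊ρ²δn/2⌋}, and let J be a uniformly random m-element subset of {1,…,n}. Define the event E(x) = { P_J x / ‖P_J x‖_2 ∈ S^J and ρ√m/√(2n) ≤ ‖P_J x‖_2 ≤ √m/√(δn) }, where S^J is the set of unit vectors supported on J with all coordinates of absolute value between K_1/√m and K_2/√m, K_1 = ρ√(δ/2), K_2 = K_1^{-1}. Then P_J(E(x)) ≥ (c₂δ)^m for a constant c₂ > 0 depending only on ρ. -/
open MeasureTheory ProbabilityTheory Real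
open scoped ENNReal Classical

noncomputable section

/-- The set `S^J` of totally spread unit vectors supported on `J`, with parameters
`K₁ = ρ√(δ/2)` and `K₂ = K₁⁻¹`. -/
def spreadVecs (n : ℕ) (J : Finset (Fin n)) (m : ℕ) (δ ρ : ℝ) : Set (EucSp n) :=
  {y | ‖y‖ = 1 ∧ (∀ k, k ∉ J → y k = 0) ∧
    ∀ k ∈ J, ρ * Real.sqrt (δ / 2) / Real.sqrt m ≤ |y k| ∧
      |y k| ≤ (ρ * Real.sqrt (δ / 2))⁻¹ / Real.sqrt m}


lemma aux_pow_le_three_pow_factorial : ∀ m : ℕ, (m:ℝ)^m ≤ 3^m * m.factorial := by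
  intro m
  induction m with
  | zero => simp
  | succ k ih =>
    rcases Nat.eq_zero_or_pos k with hk | hk
    · subst hk; norm_num
    have hkR : (0:ℝ) < k := by exact_mod_cast hk
    have h1 : ((k:ℝ)+1)^k ≤ 3 * (k:ℝ)^k := by
      have heq : (k:ℝ)+1 = (k:ℝ) * (1 + 1/k) := by field_simp
      have h2 : (1 + 1/(k:ℝ))^k ≤ 3 := by
        have h3 : (1 + 1/(k:ℝ)) ≤ Real.exp (1/k) := by
          have := Real.add_one_le_exp (1/(k:ℝ)); linarith
        calc (1 + 1/(k:ℝ))^k ≤ (Real.exp (1/k))^k := by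
              apply pow_le_pow_left₀ (by positivity) h3
          _ = Real.exp ((k:ℕ) * (1/k)) := by rw [← Real.exp_nat_mul]
          _ = Real.exp 1 := by congr 1; field_simp
          _ ≤ 3 := by linarith [Real.exp_one_lt_d9]
      calc ((k:ℝ)+1)^k = (k:ℝ)^k * (1+1/k)^k := by rw [heq, mul_pow]
        _ ≤ (k:ℝ)^k * 3 := by
            apply mul_le_mul_of_nonneg_left h2 (by positivity)
        _ = 3 * (k:ℝ)^k := by ring
    have hfact : ((k+1).factorial : ℝ) = ((k:ℝ)+1) * k.factorial := by
      rw [Nat.factorial_succ]; push_cast; ring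
    calc ((k+1:ℕ):ℝ)^(k+1) = ((k:ℝ)+1) * ((k:ℝ)+1)^k := by push_cast; ring
      _ ≤ ((k:ℝ)+1) * (3 * (k:ℝ)^k) := by
          apply mul_le_mul_of_nonneg_left h1 (by positivity)
      _ ≤ ((k:ℝ)+1) * (3 * (3^k * k.factorial)) := by
          apply mul_le_mul_of_nonneg_left (by linarith) (by positivity)
      _ = 3^(k+1) * ((k+1).factorial) := by rw [hfact]; ring

lemma aux_pow_div_le_choose (a m : ℕ) (hma : m ≤ a) : ((a:ℝ)/m)^m ≤ (a.choose m : ℝ) := by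
  have cast_desc : ∀ b : ℕ, m ≤ b → (b.descFactorial m : ℝ) = ∏ i ∈ Finset.range m, ((b:ℝ) - i) := by
    intro b hb
    rw [Nat.descFactorial_eq_prod_range, Nat.cast_prod]
    refine Finset.prod_congr rfl fun i hi => ?_
    rw [Nat.cast_sub (le_trans (Nat.le_of_lt_succ (Nat.lt_succ_of_lt (Finset.mem_range.mp hi))) hb)]
  have hfac : (m.factorial : ℝ) = ∏ i ∈ Finset.range m, ((m:ℝ) - i) := by
    rw [← Nat.descFactorial_self m]; exact cast_desc m le_rfl
  have hchoose : (a.choose m : ℝ) = (a.descFactorial m : ℝ) / m.factorial := by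
    rw [Nat.descFactorial_eq_factorial_mul_choose]
    push_cast
    field_simp
  rw [hchoose, le_div_iff₀ (by positivity)]
  rw [hfac, cast_desc a hma,
    show ((a:ℝ)/m)^m = ∏ _i ∈ Finset.range m, ((a:ℝ)/m) by
      rw [Finset.prod_const, Finset.card_range],
    ← Finset.prod_mul_distrib]
  apply Finset.prod_le_prod
  · intro i hi
    have : (i:ℝ) < m := by exact_mod_cast Finset.mem_range.mp hi
    exact mul_nonneg (by positivity) (by linarith)
  · intro i hi
    have him : (i:ℝ) < m := by exact_mod_cast Finset.mem_range.mp hi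
    have hmR : (0:ℝ) < m := lt_of_le_of_lt (by positivity) him
    have haR : (m:ℝ) ≤ a := by exact_mod_cast hma
    rw [div_mul_eq_mul_div, div_le_iff₀ hmR]
    nlinarith [Nat.cast_nonneg (α := ℝ) i]

set_option maxHeartbeats 2000000 in
/-- For an incompressible `x`, a uniformly random `m`-element subset `J` satisfies, with
probability at least `(c₂δ)^m`, that `P_J x / ‖P_J x‖₂ ∈ S^J` and
`ρ√m/√(2n) ≤ ‖P_J x‖₂ ≤ √m/√(δn)`.  (The probability is expressed by counting subsets.) -/
theorem stmt8 (ρ : ℝ) (hρ : ρ ∈ Set.Ioc (0:ℝ) 1) :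
    ∃ c₂ : ℝ, 0 < c₂ ∧
      ∀ (n d m : ℕ) (δ : ℝ), δ ∈ Set.Ioc (0:ℝ) 1 → 1 ≤ d → 1 ≤ m →
        (m : ℝ) ≤ min (d : ℝ) (ρ ^ 2 * δ * n / 2) →
        ∀ x ∈ incompVecs n δ ρ,
          (c₂ * δ) ^ m * (n.choose m : ℝ) ≤
            (((Finset.univ : Finset (Fin n)).powersetCard m).filter
              (fun J : Finset (Fin n) =>
                WithLp.toLp 2 (fun i => if i ∈ J then x i / Real.sqrt (∑ j ∈ J, (x j) ^ 2) else 0) ∈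
                  spreadVecs n J m δ ρ ∧
                ρ * Real.sqrt m / Real.sqrt (2 * n) ≤ Real.sqrt (∑ j ∈ J, (x j) ^ 2) ∧
                Real.sqrt (∑ j ∈ J, (x j) ^ 2) ≤ Real.sqrt m / Real.sqrt (δ * n))).card := by
  obtain ⟨hρ0, hρ1⟩ := hρ
  refine ⟨ρ^2/6, by positivity, ?_⟩
  intro n d m δ hδ hd hm hmin x hx
  obtain ⟨hδ0, hδ1⟩ := hδ
  obtain ⟨hxnorm, hxdist⟩ := hx
  have hm2 : (m:ℝ) ≤ ρ^2*δ*n/2 := le_trans hmin (min_le_right _ _)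
  have hmR : (1:ℝ) ≤ m := by exact_mod_cast hm
  have hmR0 : (0:ℝ) < m := by linarith
  have hn : 0 < n := by
    rcases Nat.eq_zero_or_pos n with h | h
    · subst h; norm_num at hm2; nlinarith
    · exact h
  have hnR : (0:ℝ) < n := by exact_mod_cast hn
  -- sum of squares equals 1
  have hsum : ∑ i, (x i)^2 = 1 := by
    have h := EuclideanSpace.norm_eq x
    rw [hxnorm] at h
    have h2 : ∑ i, ‖x i‖^2 = 1 := by
      have := Real.sqrt_eq_one.mp h.symm
      exact this
    simpa [Real.norm_eq_abs, sq_abs] using h2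
  set a := Real.sqrt (δ * n) with ha
  set b := Real.sqrt (2 * n) with hb
  have ha0 : 0 < a := Real.sqrt_pos.mpr (by positivity)
  have hb0 : 0 < b := Real.sqrt_pos.mpr (by positivity)
  have ha2 : a^2 = δ*n := Real.sq_sqrt (by positivity)
  have hb2 : b^2 = 2*n := Real.sq_sqrt (by positivity)
  set A := Finset.univ.filter (fun k : Fin n => 1/a < |x k|) with hA
  -- the compressible approximation
  set y : EucSp n := WithLp.toLp 2 (fun k => if k ∈ A then x k else 0) with hy
  have hAcard : (A.card : ℝ) ≤ δ * n := by
    have hlow : ∀ k ∈ A, 1/(δ*n) ≤ (x k)^2 := by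
      intro k hk
      have h1 : 1/a < |x k| := (Finset.mem_filter.mp hk).2
      have h2 : (1/a)^2 ≤ |x k|^2 := pow_le_pow_left₀ (by positivity) h1.le 2
      calc 1/(δ*n) = (1/a)^2 := by rw [div_pow, one_pow, ha2]
        _ ≤ |x k|^2 := h2
        _ = (x k)^2 := sq_abs _
    have hsum2 : (A.card:ℝ) * (1/(δ*n)) ≤ ∑ k ∈ A, (x k)^2 := by
      calc (A.card:ℝ)*(1/(δ*n)) = ∑ _k ∈ A, 1/(δ*n) := by
            rw [Finset.sum_const, nsmul_eq_mul]
        _ ≤ ∑ k ∈ A, (x k)^2 := Finset.sum_le_sum hlow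
    have hle1 : ∑ k ∈ A, (x k)^2 ≤ 1 := by
      rw [← hsum]
      exact Finset.sum_le_sum_of_subset_of_nonneg (Finset.subset_univ _)
        (fun i _ _ => sq_nonneg _)
    have h3 := le_trans hsum2 hle1
    calc (A.card:ℝ) = ((A.card:ℝ) * (1/(δ*n))) * (δ*n) := by field_simp
      _ ≤ 1 * (δ*n) := mul_le_mul_of_nonneg_right h3 (by positivity)
      _ = δ*n := one_mul _
  have hy_sparse : y ∈ sparseVecs n δ := by
    show (Nat.card {i : Fin n // y i ≠ 0} : ℝ) ≤ δ * n
    have hcard : Nat.card {i : Fin n // y i ≠ 0} =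
        (Finset.univ.filter (fun i => y i ≠ 0)).card := by
      rw [Nat.card_eq_fintype_card, Fintype.card_subtype]
    rw [hcard]
    refine le_trans ?_ hAcard
    have hsub : Finset.univ.filter (fun i => y i ≠ 0) ⊆ A := by
      intro i hi
      by_contra hiA
      have : y i = 0 := by simp [hy, hiA]
      exact (Finset.mem_filter.mp hi).2 this
    exact_mod_cast Finset.card_le_card hsub
  have hρ2 : ρ^2 < ∑ i ∈ Aᶜ, (x i)^2 := by
    have h1 : Metric.infDist x (sparseVecs n δ) ≤ dist x y :=
      Metric.infDist_le_dist_of_mem hy_sparse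
    have h2 : dist x y = Real.sqrt (∑ i ∈ Aᶜ, (x i)^2) := by
      rw [dist_eq_norm, EuclideanSpace.norm_eq]
      congr 1
      rw [← Finset.sum_add_sum_compl A]
      have hz : ∑ i ∈ A, ‖(x - y) i‖^2 = 0 :=
        Finset.sum_eq_zero fun i hi => by
          simp [hy, PiLp.sub_apply, hi]
      rw [hz, zero_add]
      refine Finset.sum_congr rfl fun i hi => ?_
      simp [hy, PiLp.sub_apply, Finset.mem_compl.mp hi, Real.norm_eq_abs, sq_abs]
    have h3 : ρ < Real.sqrt (∑ i ∈ Aᶜ, (x i)^2) := lt_of_lt_of_le (lt_of_lt_of_le hxdist h1) (le_of_eq h2)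
    have hnn : (0:ℝ) ≤ ∑ i ∈ Aᶜ, (x i)^2 := Finset.sum_nonneg fun i _ => sq_nonneg _
    calc ρ^2 < (Real.sqrt (∑ i ∈ Aᶜ, (x i)^2))^2 := by
          exact pow_lt_pow_left₀ h3 hρ0.le two_ne_zero
      _ = ∑ i ∈ Aᶜ, (x i)^2 := Real.sq_sqrt hnn
  set σ := Finset.univ.filter (fun k : Fin n => ρ/b ≤ |x k| ∧ |x k| ≤ 1/a) with hσ
  have hσsub : σ ⊆ Aᶜ := by
    intro k hk
    rw [Finset.mem_compl, hA, Finset.mem_filter]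
    push_neg
    intro _
    exact (Finset.mem_filter.mp hk).2.2
  have hσcard : ρ^2*δ*n/2 < (σ.card:ℝ) := by
    have h1 : ∑ i ∈ σ, (x i)^2 ≤ (σ.card:ℝ) * (1/(δ*n)) := by
      calc ∑ i ∈ σ, (x i)^2 ≤ ∑ _i ∈ σ, 1/(δ*n) := by
            refine Finset.sum_le_sum fun i hi => ?_
            have h2 := (Finset.mem_filter.mp hi).2.2
            calc (x i)^2 = |x i|^2 := (sq_abs _).symm
              _ ≤ (1/a)^2 := pow_le_pow_left₀ (abs_nonneg _) h2 2
              _ = 1/(δ*n) := by rw [div_pow, one_pow, ha2]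
        _ = (σ.card:ℝ) * (1/(δ*n)) := by rw [Finset.sum_const, nsmul_eq_mul]
    have h2 : ∑ i ∈ Aᶜ \ σ, (x i)^2 ≤ ((Aᶜ \ σ).card : ℝ) * (ρ^2/(2*n)) := by
      calc ∑ i ∈ Aᶜ \ σ, (x i)^2 ≤ ∑ _i ∈ Aᶜ \ σ, ρ^2/(2*n) := by
            refine Finset.sum_le_sum fun i hi => ?_
            obtain ⟨hiA, hiσ⟩ := Finset.mem_sdiff.mp hi
            have hub : |x i| ≤ 1/a := le_of_not_gt (by
              intro hcon
              exact (Finset.mem_compl.mp hiA) (Finset.mem_filter.mpr ⟨Finset.mem_univ _, hcon⟩))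
            have hlb : |x i| < ρ/b := by
              by_contra hcon
              exact hiσ (Finset.mem_filter.mpr ⟨Finset.mem_univ _, ⟨le_of_not_gt hcon, hub⟩⟩)
            calc (x i)^2 = |x i|^2 := (sq_abs _).symm
              _ ≤ (ρ/b)^2 := pow_le_pow_left₀ (abs_nonneg _) hlb.le 2
              _ = ρ^2/(2*n) := by rw [div_pow, hb2]
        _ = ((Aᶜ \ σ).card : ℝ) * (ρ^2/(2*n)) := by rw [Finset.sum_const, nsmul_eq_mul]
    have h3 : ((Aᶜ \ σ).card : ℝ) ≤ n := by
      have := Finset.card_le_univ (Aᶜ \ σ)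
      have h4 : ((Aᶜ \ σ).card : ℝ) ≤ (Finset.univ : Finset (Fin n)).card := by exact_mod_cast this
      simpa using h4
    have hsplit : ∑ i ∈ Aᶜ, (x i)^2
        = ∑ i ∈ Aᶜ \ σ, (x i)^2 + ∑ i ∈ σ, (x i)^2 := (Finset.sum_sdiff hσsub).symm
    have h5 : ρ^2 < (σ.card:ℝ) * (1/(δ*n)) + ρ^2/2 := by
      have h6 : ((Aᶜ \ σ).card : ℝ) * (ρ^2/(2*n)) ≤ ρ^2/2 := by
        have h7 : ((Aᶜ \ σ).card : ℝ) * (ρ^2/(2*n)) ≤ (n:ℝ) * (ρ^2/(2*n)) :=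
          mul_le_mul_of_nonneg_right h3 (by positivity)
        have h8 : (n:ℝ) * (ρ^2/(2*n)) = ρ^2/2 := by field_simp
        linarith
      nlinarith [hρ2, hsplit, h1, h2]
    have h7 : ρ^2/2 < (σ.card:ℝ) * (1/(δ*n)) := by linarith
    have h8 : (0:ℝ) < δ*n := by positivity
    calc ρ^2*δ*n/2 = (ρ^2/2) * (δ*n) := by ring
      _ < ((σ.card:ℝ) * (1/(δ*n))) * (δ*n) := by
          exact mul_lt_mul_of_pos_right h7 h8
      _ = (σ.card:ℝ) := by field_simp
  have hmσ : m ≤ σ.card := by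
    have : (m:ℝ) ≤ (σ.card:ℝ) := le_trans hm2 hσcard.le
    exact_mod_cast this
  -- the event holds for every J ⊆ σ with |J| = m
  have hP : ∀ J : Finset (Fin n), J ⊆ σ → J.card = m →
      (WithLp.toLp 2 (fun i => if i ∈ J then x i / Real.sqrt (∑ j ∈ J, (x j) ^ 2) else 0) ∈
          spreadVecs n J m δ ρ ∧
        ρ * Real.sqrt m / Real.sqrt (2 * n) ≤ Real.sqrt (∑ j ∈ J, (x j) ^ 2) ∧
        Real.sqrt (∑ j ∈ J, (x j) ^ 2) ≤ Real.sqrt m / Real.sqrt (δ * n)) := by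
    intro J hJσ hJm
    set s := ∑ j ∈ J, (x j)^2 with hs
    have hcoord : ∀ j ∈ J, ρ/b ≤ |x j| ∧ |x j| ≤ 1/a := fun j hj =>
      (Finset.mem_filter.mp (hJσ hj)).2
    have hslow : (m:ℝ) * (ρ^2/(2*n)) ≤ s := by
      calc (m:ℝ) * (ρ^2/(2*n)) = ∑ _j ∈ J, ρ^2/(2*n) := by
            rw [Finset.sum_const, hJm, nsmul_eq_mul]
        _ ≤ s := by
            refine Finset.sum_le_sum fun j hj => ?_
            have h1 := (hcoord j hj).1
            calc ρ^2/(2*n) = (ρ/b)^2 := by rw [div_pow, hb2]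
              _ ≤ |x j|^2 := pow_le_pow_left₀ (by positivity) h1 2
              _ = (x j)^2 := sq_abs _
    have hshigh : s ≤ (m:ℝ) * (1/(δ*n)) := by
      calc s ≤ ∑ _j ∈ J, 1/(δ*n) := by
            refine Finset.sum_le_sum fun j hj => ?_
            have h2 := (hcoord j hj).2
            calc (x j)^2 = |x j|^2 := (sq_abs _).symm
              _ ≤ (1/a)^2 := pow_le_pow_left₀ (abs_nonneg _) h2 2
              _ = 1/(δ*n) := by rw [div_pow, one_pow, ha2]
        _ = (m:ℝ) * (1/(δ*n)) := by rw [Finset.sum_const, hJm, nsmul_eq_mul]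
    have hs0 : 0 < s := lt_of_lt_of_le (by positivity) hslow
    set t := Real.sqrt s with ht
    have ht0 : 0 < t := Real.sqrt_pos.mpr hs0
    have ht2 : t^2 = s := Real.sq_sqrt hs0.le
    set c := Real.sqrt (m:ℝ) with hc
    have hc0 : 0 < c := Real.sqrt_pos.mpr hmR0
    have hc2 : c^2 = m := Real.sq_sqrt hmR0.le
    have htlow : ρ * c / b ≤ t := by
      rw [ht]
      rw [show ρ * c / b = Real.sqrt ((ρ*c/b)^2) from
        (Real.sqrt_sq (by positivity)).symm]
      apply Real.sqrt_le_sqrt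
      calc (ρ*c/b)^2 = ρ^2 * c^2 / b^2 := by ring
        _ = (m:ℝ) * (ρ^2/(2*n)) := by rw [hc2, hb2]; ring
        _ ≤ s := hslow
    have hthigh : t ≤ c / a := by
      rw [ht]
      rw [show c / a = Real.sqrt ((c/a)^2) from (Real.sqrt_sq (by positivity)).symm]
      apply Real.sqrt_le_sqrt
      calc s ≤ (m:ℝ) * (1/(δ*n)) := hshigh
        _ = c^2/a^2 := by rw [hc2, ha2]; ring
        _ = (c/a)^2 := by ring
    refine ⟨?_, htlow, hthigh⟩
    -- spread membership
    have hK : Real.sqrt (δ/2) = a / b := by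
      rw [ha, hb, ← Real.sqrt_div (by positivity : (0:ℝ) ≤ δ*n)]
      congr 1
      field_simp
    refine ⟨?_, ?_, ?_⟩
    · -- norm equals 1
      rw [EuclideanSpace.norm_eq]
      have hval : ∑ i, ‖(WithLp.toLp 2 (fun i => if i ∈ J then x i / t else 0) : EucSp n) i‖^2 = 1 := by
        simp only [PiLp.toLp_apply, Real.norm_eq_abs, sq_abs, apply_ite (fun z : ℝ => z^2),
          zero_pow (by norm_num : (2:ℕ) ≠ 0), Finset.sum_ite_mem, Finset.univ_inter, div_pow]
        rw [← Finset.sum_div, ← hs, ht2, div_self hs0.ne']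
      rw [hval, Real.sqrt_one]
    · intro k hk
      simp [hk]
    · intro k hk
      have hbeta : ((WithLp.toLp 2 (fun i => if i ∈ J then x i / t else 0) : EucSp n) k) = x k / t := by
        simp [hk]
      rw [hbeta, abs_div, abs_of_pos ht0, hK]
      obtain ⟨hx1, hx2⟩ := hcoord k hk
      have hxk0 : (0:ℝ) ≤ |x k| := abs_nonneg _
      constructor
      · rw [div_le_div_iff₀ hc0 ht0]
        calc ρ * (a/b) * t ≤ ρ * (a/b) * (c/a) := by
              apply mul_le_mul_of_nonneg_left hthigh (by positivity)
          _ = (ρ/b) * c := by field_simp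
          _ ≤ |x k| * c := mul_le_mul_of_nonneg_right hx1 hc0.le
      · rw [div_le_div_iff₀ ht0 hc0]
        calc |x k| * c ≤ (1/a) * c := mul_le_mul_of_nonneg_right hx2 hc0.le
          _ = (ρ * (a/b))⁻¹ * (ρ*c/b) := by field_simp
          _ ≤ (ρ * (a/b))⁻¹ * t := by
              apply mul_le_mul_of_nonneg_left htlow (by positivity)
  -- counting
  classical
  have hsubfilter : σ.powersetCard m ⊆
      ((Finset.univ : Finset (Fin n)).powersetCard m).filter
        (fun J : Finset (Fin n) =>
          WithLp.toLp 2 (fun i => if i ∈ J then x i / Real.sqrt (∑ j ∈ J, (x j) ^ 2) else 0) ∈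
            spreadVecs n J m δ ρ ∧
          ρ * Real.sqrt m / Real.sqrt (2 * n) ≤ Real.sqrt (∑ j ∈ J, (x j) ^ 2) ∧
          Real.sqrt (∑ j ∈ J, (x j) ^ 2) ≤ Real.sqrt m / Real.sqrt (δ * n)) := by
    intro J hJ
    obtain ⟨hJσ, hJc⟩ := Finset.mem_powersetCard.mp hJ
    rw [Finset.mem_filter, Finset.mem_powersetCard]
    exact ⟨⟨Finset.subset_univ J, hJc⟩, hP J hJσ hJc⟩
  have hcard1 : (σ.card.choose m : ℝ) ≤
      (((Finset.univ : Finset (Fin n)).powersetCard m).filter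
        (fun J : Finset (Fin n) =>
          WithLp.toLp 2 (fun i => if i ∈ J then x i / Real.sqrt (∑ j ∈ J, (x j) ^ 2) else 0) ∈
            spreadVecs n J m δ ρ ∧
          ρ * Real.sqrt m / Real.sqrt (2 * n) ≤ Real.sqrt (∑ j ∈ J, (x j) ^ 2) ∧
          Real.sqrt (∑ j ∈ J, (x j) ^ 2) ≤ Real.sqrt m / Real.sqrt (δ * n))).card := by
    have h1 := Finset.card_le_card hsubfilter
    rw [Finset.card_powersetCard] at h1
    exact_mod_cast h1
  refine le_trans ?_ hcard1
  -- final numeric estimate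
  set K := ρ^2/6*δ with hKdef
  have hK0 : 0 < K := by positivity
  have hs3 : K * n ≤ (σ.card:ℝ)/3 := by
    have : ρ^2*δ*n/2 ≤ (σ.card:ℝ) := hσcard.le
    rw [hKdef]
    nlinarith
  have hfact0 : (0:ℝ) < m.factorial := by exact_mod_cast m.factorial_pos
  have h3m : (0:ℝ) < 3^m := by positivity
  have hmm : (0:ℝ) < (m:ℝ)^m := by positivity
  calc (ρ^2/6 * δ)^m * (n.choose m : ℝ) ≤ K^m * ((n:ℝ)^m / m.factorial) := by
        apply mul_le_mul_of_nonneg_left (Nat.choose_le_pow_div m n) (by positivity)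
    _ = (K*n)^m / m.factorial := by rw [mul_pow]; ring
    _ ≤ ((σ.card:ℝ)/3)^m / m.factorial := by
        gcongr
    _ ≤ ((σ.card:ℝ)/m)^m := by
        rw [div_le_iff₀ hfact0]
        have hfge : (m:ℝ)^m / 3^m ≤ (m.factorial : ℝ) := by
          rw [div_le_iff₀ h3m]
          have := aux_pow_le_three_pow_factorial m
          linarith
        have hid : ((σ.card:ℝ)/m)^m * ((m:ℝ)^m/3^m) = ((σ.card:ℝ)/3)^m := by
          rw [div_pow, div_pow]
          field_simp [hmR0.ne']
        calc ((σ.card:ℝ)/3)^m = ((σ.card:ℝ)/m)^m * ((m:ℝ)^m/3^m) := hid.symm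
          _ ≤ ((σ.card:ℝ)/m)^m * (m.factorial : ℝ) := by
              apply mul_le_mul_of_nonneg_left hfge (by positivity)
    _ ≤ ((σ.card).choose m : ℝ) := aux_pow_div_le_choose _ _ hmσ
end
end

section
/- Let Z be an N×n random matrix with columns Z_1,…,Z_n, let m ≤ min{d, ⌊ρ²δn/2⌋}, and for an m-element subset J ⊆ {1,…,n} let H_{J^c} = span(Z_k : k ∉ J). Then for every ε > 0, P( inf_{x ∈ Incomp_n(δ,ρ)} ‖Zx‖_2 < ερ√(m/(2n)) ) ≤ (c₂δ)^{-m} · max_J P( inf_{x ∈ S^J} dist(Zx, H_{J^c}) < ε ), where the max is over m-element subsets J and c₂ is the constant from the random-subset lemma. -/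
open MeasureTheory ProbabilityTheory Real
open scoped ENNReal Classical

noncomputable section

set_option maxHeartbeats 1000000


/-- `(m/e)^m ≤ m!` -/
lemma fact_lower (m : ℕ) : ((m : ℝ) / Real.exp 1) ^ m ≤ (m.factorial : ℝ) := by
  induction m with
  | zero => simp
  | succ m ih =>
    have he : (0:ℝ) < Real.exp 1 := Real.exp_pos 1
    have key : ((m:ℝ)+1)^m ≤ Real.exp 1 * (m:ℝ)^m := by
      rcases Nat.eq_zero_or_pos m with h0 | h0
      · subst h0; simpa using Real.one_le_exp (by norm_num)
      · have hm : (0:ℝ) < m := by exact_mod_cast h0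
        have h1 : ((m:ℝ)+1) = m * (1 + 1/m) := by field_simp
        have h2 : (1 + 1/(m:ℝ)) ^ m ≤ Real.exp 1 := by
          have := Real.add_one_le_exp (1/(m:ℝ))
          calc (1 + 1/(m:ℝ)) ^ m ≤ (Real.exp (1/(m:ℝ))) ^ m := by
                apply pow_le_pow_left₀ (by positivity) (by linarith)
            _ = Real.exp (m * (1/(m:ℝ))) := by
                rw [← Real.exp_nat_mul]
            _ = Real.exp 1 := by rw [mul_one_div, div_self (ne_of_gt hm)]
        calc ((m:ℝ)+1)^m = (m:ℝ)^m * (1 + 1/m)^m := by rw [h1, mul_pow]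
          _ ≤ (m:ℝ)^m * Real.exp 1 := by
              apply mul_le_mul_of_nonneg_left h2 (by positivity)
          _ = Real.exp 1 * (m:ℝ)^m := by ring
    have : (((m:ℕ)+1 : ℝ) / Real.exp 1) ^ (m+1) ≤ ((m:ℝ)+1) * (((m:ℝ)) / Real.exp 1) ^ m := by
      rw [div_pow, div_pow, pow_succ]
      rw [div_le_iff₀ (by positivity)]
      have : ((m:ℝ)+1)^m * ((m:ℝ)+1) = ((m:ℝ)+1) * ((m:ℝ)+1)^m := by ring
      calc ((m:ℝ)+1)^(m+1) = ((m:ℝ)+1) * ((m:ℝ)+1)^m := by ring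
        _ ≤ ((m:ℝ)+1) * (Real.exp 1 * (m:ℝ)^m) := by
            apply mul_le_mul_of_nonneg_left key (by positivity)
        _ = (((m:ℝ)+1) * ((m:ℝ)^m / Real.exp 1 ^ m)) * Real.exp 1 ^ (m+1) := by
            field_simp
            ring
    calc (((m+1:ℕ)) / Real.exp 1 : ℝ) ^ (m+1) ≤ ((m:ℝ)+1) * (((m:ℝ)) / Real.exp 1) ^ m := by
          push_cast; exact this
      _ ≤ ((m:ℝ)+1) * (m.factorial : ℝ) := by
          apply mul_le_mul_of_nonneg_left ih (by positivity)
      _ = ((m+1).factorial : ℝ) := by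
          rw [Nat.factorial_succ]; push_cast; ring

/-- `(s/m)^m ≤ C(s,m)` for `m ≤ s`. -/
lemma choose_lower {s m : ℕ} (h : m ≤ s) : ((s:ℝ)/m)^m ≤ (s.choose m : ℝ) := by
  rcases Nat.eq_zero_or_pos m with h0 | h0
  · subst h0; simp
  have hm : (0:ℝ) < m := by exact_mod_cast h0
  have hdesc : ((s:ℝ)/m)^m * (m.factorial : ℝ) ≤ (s.descFactorial m : ℝ) := by
    have : (s.descFactorial m : ℝ) = ∏ i ∈ Finset.range m, ((s : ℝ) - i) := by
      rw [Nat.descFactorial_eq_prod_range]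
      push_cast [Nat.cast_prod]
      apply Finset.prod_congr rfl
      intro i hi
      have : i ≤ s := le_trans (le_of_lt (Finset.mem_range.1 hi)) h
      push_cast [Nat.cast_sub this]
      ring
    rw [this]
    have hfact : (m.factorial : ℝ) = ∏ i ∈ Finset.range m, ((m : ℝ) - i) := by
      rw [← Nat.descFactorial_self, Nat.descFactorial_eq_prod_range]
      push_cast [Nat.cast_prod]
      apply Finset.prod_congr rfl
      intro i hi
      have : i ≤ m := le_of_lt (Finset.mem_range.1 hi)
      push_cast [Nat.cast_sub this]
      ring
    rw [hfact]
    rw [show ((s:ℝ)/m)^m = ∏ _i ∈ Finset.range m, ((s:ℝ)/m) by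
      rw [Finset.prod_const, Finset.card_range]]
    rw [← Finset.prod_mul_distrib]
    apply Finset.prod_le_prod
    · intro i hi
      have hi' : (i:ℝ) < m := by exact_mod_cast Finset.mem_range.1 hi
      exact mul_nonneg (by positivity) (by linarith)
    · intro i hi
      have hi' : (i:ℝ) < m := by exact_mod_cast Finset.mem_range.1 hi
      have hs : (m:ℝ) ≤ s := by exact_mod_cast h
      rw [div_mul_eq_mul_div, div_le_iff₀ hm]
      nlinarith
  have := Nat.descFactorial_eq_factorial_mul_choose s m
  have hEq : (s.descFactorial m : ℝ) = (m.factorial : ℝ) * (s.choose m : ℝ) := by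
    exact_mod_cast congrArg (Nat.cast : ℕ → ℝ) this
  rw [hEq] at hdesc
  have hf : (0:ℝ) < (m.factorial : ℝ) := by exact_mod_cast m.factorial_pos
  nlinarith [hdesc, hf]


lemma count_measure {Ω : Type} [MeasurableSpace Ω] (μ : Measure Ω) {ι : Type*}
    (t : Finset ι) (E : ι → Set Ω) (B : Set Ω) (K : ℝ≥0∞)
    (h : ∀ ω ∈ B, K ≤ ((t.filter (fun J => ω ∈ E J)).card : ℝ≥0∞)) :
    K * μ B ≤ ∑ J ∈ t, μ (E J) := by
  classical
  set F : ι → Set Ω := fun J => toMeasurable μ (E J) with hF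
  set f : Ω → ℝ≥0∞ := fun ω => ∑ J ∈ t, (F J).indicator (fun _ => (1:ℝ≥0∞)) ω with hf
  have hmeas : Measurable f := by
    apply Finset.measurable_sum
    intro J _
    exact Measurable.indicator measurable_const (measurableSet_toMeasurable μ (E J))
  have hB : ∀ ω ∈ B, K ≤ f ω := by
    intro ω hω
    refine le_trans (h ω hω) ?_
    have : ((t.filter (fun J => ω ∈ E J)).card : ℝ≥0∞)
        = ∑ J ∈ t.filter (fun J => ω ∈ E J), (1:ℝ≥0∞) := by simp
    rw [this, hf]
    refine le_trans (Finset.sum_le_sum ?_) (Finset.sum_le_sum_of_subset (Finset.filter_subset _ _))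
    intro J hJ
    have hωJ : ω ∈ F J := subset_toMeasurable μ (E J) (Finset.mem_filter.1 hJ).2
    simp [Set.indicator_of_mem hωJ]
  have hsub : B ⊆ {ω | K ≤ f ω} := hB
  calc K * μ B ≤ K * μ {ω | K ≤ f ω} := by
        exact mul_le_mul_right (measure_mono hsub) K
    _ ≤ ∫⁻ ω, f ω ∂μ := mul_meas_ge_le_lintegral hmeas K
    _ = ∑ J ∈ t, μ (E J) := by
        rw [hf]
        rw [lintegral_finset_sum _ (fun J _ =>
          Measurable.indicator measurable_const (measurableSet_toMeasurable μ (E J)))]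
        apply Finset.sum_congr rfl
        intro J _
        rw [show ((fun _ => (1:ℝ≥0∞)) : Ω → ℝ≥0∞) = (1 : Ω → ℝ≥0∞) from rfl,
          lintegral_indicator_one (measurableSet_toMeasurable μ (E J))]
        exact measure_toMeasurable (E J)

lemma mulVecE_sub {N n : ℕ} (A : Matrix (Fin N) (Fin n) ℝ) (u v : EucSp n) :
    mulVecE A (u - v) = mulVecE A u - mulVecE A v :=
  by simp only [mulVecE, WithLp.ofLp_sub, Matrix.mulVec_sub, WithLp.toLp_sub]

lemma mulVecE_smul {N n : ℕ} (A : Matrix (Fin N) (Fin n) ℝ) (c : ℝ) (u : EucSp n) :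
    mulVecE A (c • u) = c • mulVecE A u :=
  by simp only [mulVecE, WithLp.ofLp_smul, Matrix.mulVec_smul, WithLp.toLp_smul]

lemma mulVecE_mem_span {N n : ℕ} (A : Matrix (Fin N) (Fin n) ℝ) (J : Finset (Fin n))
    (z : EucSp n) (hz : ∀ k ∈ J, z k = 0) :
    mulVecE A z ∈ (Submodule.span ℝ
      {v : EucSp N | ∃ k ∉ J, v = fun i => A i k} : Submodule ℝ (EucSp N)) := by
  classical
  have hrepr : mulVecE A z = ∑ k ∈ Jᶜ, z k • (WithLp.toLp 2 (fun i => A i k) : EucSp N) := by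
    ext i
    have h2 : (∑ k ∈ Jᶜ, z k • (WithLp.toLp 2 (fun i => A i k) : EucSp N)) i
        = ∑ k ∈ Jᶜ, z k * A i k := by
      rw [WithLp.ofLp_sum, Finset.sum_apply]
      apply Finset.sum_congr rfl
      intro k _
      rfl
    rw [h2]
    show (A.mulVec z) i = _
    rw [Matrix.mulVec, dotProduct]
    rw [← Finset.sum_subset (Finset.subset_univ Jᶜ)]
    · exact Finset.sum_congr rfl (fun k _ => mul_comm _ _)
    · intro k _ hk
      have hkJ : k ∈ J := by simpa using hk
      rw [hz k hkJ, mul_zero]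
  rw [hrepr]
  apply Submodule.sum_mem
  intro k hk
  apply Submodule.smul_mem
  apply Submodule.subset_span
  exact ⟨k, by simpa using hk, rfl⟩

/-- For an incompressible unit vector there is a large "spread" coordinate set `σ`
such that every `m`-subset `J` of `σ` yields a totally spread normalized restriction. -/
lemma spread_exists {n m : ℕ} {δ ρ : ℝ} (hδ : δ ∈ Set.Ioc (0:ℝ) 1) (hρ : ρ ∈ Set.Ioc (0:ℝ) 1)
    (hm1 : 1 ≤ m) (hmn : m ≤ n) (hmρ : (m:ℝ) ≤ ρ^2*δ*n/2)
    {x : EucSp n} (hx : x ∈ incompVecs n δ ρ) :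
    ∃ σ : Finset (Fin n), ρ^2*δ*n/2 ≤ (σ.card : ℝ) ∧
      ∀ J ⊆ σ, J.card = m → ∃ (c : ℝ) (y : EucSp n),
        ρ * Real.sqrt ((m:ℝ)/(2*n)) ≤ c ∧ 0 < c ∧
        y ∈ spreadVecs n J m δ ρ ∧ (∀ k ∈ J, c * y k = x k) ∧ (∀ k, k ∉ J → y k = 0) := by
  classical
  have hn1 : 1 ≤ n := le_trans hm1 hmn
  have hn : (0:ℝ) < n := by exact_mod_cast hn1
  have hδ0 : (0:ℝ) < δ := hδ.1
  have hρ0 : (0:ℝ) < ρ := hρ.1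
  set K₁ : ℝ := ρ * Real.sqrt (δ/2) with hK₁
  have hK₁0 : 0 < K₁ := by
    apply mul_pos hρ0 (Real.sqrt_pos.2 (by linarith))
  set b : ℝ := 1 / Real.sqrt (δ*n) with hb
  have hδn : (0:ℝ) < δ * n := by positivity
  have hb0 : 0 < b := by positivity
  have hb2 : b^2 = 1/(δ*n) := by
    rw [hb, div_pow, one_pow, Real.sq_sqrt (le_of_lt hδn)]
  set a : ℝ := K₁ * b with ha
  have ha0 : 0 < a := mul_pos hK₁0 hb0
  have ha2 : a^2 = ρ^2/(2*n) := by
    rw [ha, mul_pow, hK₁, mul_pow, Real.sq_sqrt (by linarith : (0:ℝ) ≤ δ/2), hb2]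
    field_simp
  -- the spread set
  set σ : Finset (Fin n) := Finset.univ.filter (fun k => a ≤ |x k| ∧ |x k| ≤ b) with hσ
  -- norm of x
  have hxnorm : ∑ k, (x k)^2 = 1 := by
    have h1 : ‖x‖ = 1 := hx.1
    have := EuclideanSpace.norm_eq x
    rw [this] at h1
    have : Real.sqrt (∑ i, ‖x i‖^2) = 1 := h1
    have h2 := congrArg (fun t => t^2) this
    simp only [Real.sq_sqrt (by positivity : (0:ℝ) ≤ ∑ i, ‖x i‖^2)] at h2
    simpa [Real.norm_eq_abs, sq_abs] using h2
  -- the large-coordinate set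
  set A : Finset (Fin n) := Finset.univ.filter (fun k => b < |x k|) with hA
  clear_value K₁ b a σ A
  have hAcard : (A.card : ℝ) ≤ δ * n := by
    have hsum : (A.card : ℝ) * b^2 ≤ ∑ k ∈ A, (x k)^2 := by
      have := Finset.card_nsmul_le_sum A (fun k => (x k)^2) (b^2) (fun k hk => by
        rw [hA] at hk
        have hkb : b < |x k| := by
          simpa using (Finset.mem_filter.1 hk).2
        show b^2 ≤ x k^2
        nlinarith [abs_nonneg (x k), sq_abs (x k), hb0])
      simpa [nsmul_eq_mul] using this
    have hsum2 : ∑ k ∈ A, (x k)^2 ≤ 1 := by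
      rw [← hxnorm]
      apply Finset.sum_le_sum_of_subset_of_nonneg (Finset.subset_univ A)
      intro k _ _; positivity
    rw [hb2] at hsum
    rw [← mul_le_mul_iff_left₀ (show (0:ℝ) < 1/(δ*n) by positivity)]
    calc (A.card : ℝ) * (1/(δ*n)) ≤ 1 := le_trans hsum hsum2
      _ = δ * n * (1/(δ*n)) := by field_simp
  -- the sparse approximation
  have hsparse : (WithLp.toLp 2 (fun k => if k ∈ A then x k else 0) : EucSp n) ∈ sparseVecs n δ := by
    unfold sparseVecs
    refine le_trans ?_ hAcard
    have : Nat.card {i : Fin n // (if i ∈ A then x i else 0) ≠ 0} =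
        (Finset.univ.filter (fun i => (if i ∈ A then x i else 0) ≠ 0)).card := by
      rw [Nat.card_eq_fintype_card, Fintype.card_subtype]
    rw [this]
    have hss : Finset.univ.filter (fun i => (if i ∈ A then x i else 0) ≠ 0) ⊆ A := by
      intro i hi
      simp only [Finset.mem_filter] at hi
      by_contra hiA
      simp [hiA] at hi
    exact_mod_cast Finset.card_le_card hss
  -- mass outside A exceeds ρ²
  have hmass : ρ^2 < ∑ k ∈ Aᶜ, (x k)^2 := by
    have hd : ρ < dist x (WithLp.toLp 2 (fun k => if k ∈ A then x k else 0) : EucSp n) :=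
      lt_of_lt_of_le hx.2 (Metric.infDist_le_dist_of_mem hsparse)
    have hdist : dist x (WithLp.toLp 2 (fun k => if k ∈ A then x k else 0) : EucSp n)
        = Real.sqrt (∑ k ∈ Aᶜ, (x k)^2) := by
      rw [EuclideanSpace.dist_eq]
      congr 1
      rw [← Finset.sum_subset (Finset.subset_univ Aᶜ)]
      · apply Finset.sum_congr rfl
        intro k hk
        have hkA : k ∉ A := by simpa using hk
        simp [hkA, Real.dist_eq, sq_abs]
      · intro k _ hk
        have hkA : k ∈ A := by simpa using hk
        simp [hkA]
    rw [hdist] at hd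
    have := Real.lt_sqrt (by positivity : (0:ℝ) ≤ ρ) |>.1 hd
    linarith [this]
  -- mass of small coordinates
  have hsmall : ∑ k ∈ Aᶜ \ σ, (x k)^2 ≤ ρ^2/2 := by
    have hterm : ∀ k ∈ Aᶜ \ σ, (x k)^2 ≤ a^2 := by
      intro k hk
      simp only [Finset.mem_sdiff, Finset.mem_compl, hA, hσ, Finset.mem_filter,
        Finset.mem_univ, true_and, not_lt, not_and, not_le] at hk
      obtain ⟨h1, h2⟩ := hk
      rcases le_or_gt a |x k| with h | h
      · exact absurd (h2 h) (not_lt.2 h1)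
      · calc (x k)^2 = |x k|^2 := (sq_abs _).symm
          _ ≤ a^2 := by nlinarith [abs_nonneg (x k)]
    calc ∑ k ∈ Aᶜ \ σ, (x k)^2 ≤ ∑ _k ∈ Aᶜ \ σ, a^2 := Finset.sum_le_sum hterm
      _ = (Aᶜ \ σ).card * a^2 := by rw [Finset.sum_const, nsmul_eq_mul]
      _ ≤ n * a^2 := by
          apply mul_le_mul_of_nonneg_right _ (by positivity)
          have : ((Aᶜ \ σ).card : ℝ) ≤ (Finset.univ : Finset (Fin n)).card := by
            exact_mod_cast Finset.card_le_card (Finset.subset_univ _)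
          simpa using this
      _ = ρ^2/2 := by rw [ha2]; field_simp
  -- mass on σ
  have hσA : σ ⊆ Aᶜ := by
    intro k hk
    simp only [hσ, Finset.mem_filter] at hk
    simp only [Finset.mem_compl, hA, Finset.mem_filter, Finset.mem_univ, true_and, not_lt]
    exact hk.2.2
  have hσmass : ρ^2/2 ≤ ∑ k ∈ σ, (x k)^2 := by
    have hsplit := Finset.sum_sdiff (f := fun k => (x k)^2) hσA
    linarith [hmass, hsmall, hsplit]
  -- cardinality of σ
  have hσcard : ρ^2*δ*n/2 ≤ (σ.card : ℝ) := by
    have h1 : ∑ k ∈ σ, (x k)^2 ≤ (σ.card : ℝ) * b^2 := by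
      have := Finset.sum_le_card_nsmul σ (fun k => (x k)^2) (b^2) (fun k hk => by
        rw [hσ] at hk
        have hkb : |x k| ≤ b := by
          simpa using (Finset.mem_filter.1 hk).2.2
        show x k^2 ≤ b^2
        nlinarith [abs_nonneg (x k), sq_abs (x k)])
      simpa [nsmul_eq_mul] using this
    rw [hb2] at h1
    have h2 : ρ^2/2 ≤ (σ.card : ℝ) * (1/(δ*n)) := le_trans hσmass h1
    have h3 := mul_le_mul_of_nonneg_right h2 (le_of_lt hδn)
    have h4 : (σ.card:ℝ) * (1/(δ*n)) * (δ*n) = (σ.card:ℝ) := by field_simp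
    linarith [h3, h4]
  refine ⟨σ, hσcard, ?_⟩
  intro J hJσ hJm
  -- bounds on coordinates in J
  have hJbound : ∀ k ∈ J, a ≤ |x k| ∧ |x k| ≤ b := by
    intro k hk
    have := hJσ hk
    rw [hσ] at this
    simp only [Finset.mem_filter] at this
    exact this.2
  set S : ℝ := ∑ k ∈ J, (x k)^2 with hS
  have hSlow : (m:ℝ) * a^2 ≤ S := by
    have := Finset.card_nsmul_le_sum J (fun k => (x k)^2) (a^2) (fun k hk => by
      have hka := (hJbound k hk).1
      show a^2 ≤ x k^2
      nlinarith [abs_nonneg (x k), sq_abs (x k), ha0])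
    rw [hS, ← hJm]
    simpa [nsmul_eq_mul] using this
  have hShigh : S ≤ (m:ℝ) * b^2 := by
    have := Finset.sum_le_card_nsmul J (fun k => (x k)^2) (b^2) (fun k hk => by
      have hkb := (hJbound k hk).2
      show x k^2 ≤ b^2
      nlinarith [abs_nonneg (x k), sq_abs (x k)])
    rw [hS, ← hJm]
    simpa [nsmul_eq_mul] using this
  have hm0 : (0:ℝ) < m := by exact_mod_cast hm1
  have hS0 : 0 < S := lt_of_lt_of_le (by positivity) hSlow
  set c : ℝ := Real.sqrt S with hc
  have hc0 : 0 < c := Real.sqrt_pos.2 hS0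
  have hclow : Real.sqrt m * a ≤ c := by
    rw [hc]
    have : Real.sqrt m * a = Real.sqrt ((m:ℝ) * a^2) := by
      rw [Real.sqrt_mul (by positivity), Real.sqrt_sq (le_of_lt ha0)]
    rw [this]
    exact Real.sqrt_le_sqrt hSlow
  have hchigh : c ≤ Real.sqrt m * b := by
    rw [hc]
    have : Real.sqrt m * b = Real.sqrt ((m:ℝ) * b^2) := by
      rw [Real.sqrt_mul (by positivity), Real.sqrt_sq (le_of_lt hb0)]
    rw [this]
    exact Real.sqrt_le_sqrt hShigh
  have hsm : (0:ℝ) < Real.sqrt m := Real.sqrt_pos.2 hm0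
  set y : EucSp n := WithLp.toLp 2 (fun k => if k ∈ J then x k / c else 0) with hy
  refine ⟨c, y, ?_, hc0, ⟨?_, ?_, ?_⟩, ?_, ?_⟩
  · -- ρ√(m/2n) ≤ c
    refine le_trans ?_ hclow
    have : ρ * Real.sqrt ((m:ℝ)/(2*n)) = Real.sqrt (ρ^2 * ((m:ℝ)/(2*n))) := by
      rw [Real.sqrt_mul (by positivity), Real.sqrt_sq (le_of_lt hρ0)]
    rw [this]
    have : Real.sqrt m * a = Real.sqrt ((m:ℝ) * a^2) := by
      rw [Real.sqrt_mul (by positivity), Real.sqrt_sq (le_of_lt ha0)]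
    rw [this]
    apply Real.sqrt_le_sqrt
    rw [ha2]
    exact le_of_eq (by ring)
  · -- norm 1
    rw [EuclideanSpace.norm_eq]
    have : ∑ i, ‖y i‖^2 = 1 := by
      simp only [Real.norm_eq_abs, sq_abs]
      rw [← Finset.sum_subset (Finset.subset_univ J)]
      · have : ∑ k ∈ J, (y k)^2 = S / c^2 := by
          rw [hS, Finset.sum_div]
          apply Finset.sum_congr rfl
          intro k hk
          rw [hy]
          simp only [hk, if_pos]
          field_simp
        rw [this, hc, Real.sq_sqrt (le_of_lt hS0), div_self (ne_of_gt hS0)]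
      · intro k _ hk
        rw [hy]; simp [hk]
    rw [this, Real.sqrt_one]
  · -- support
    intro k hk
    rw [hy]; simp [hk]
  · -- coordinate bounds
    intro k hk
    obtain ⟨hka, hkb⟩ := hJbound k hk
    have hyk : |y k| = |x k| / c := by
      rw [hy]
      simp only [hk, if_pos]
      rw [abs_div, abs_of_pos hc0]
    constructor
    · rw [hyk, ← hK₁]
      rw [div_le_div_iff₀ hsm hc0]
      calc K₁ * c ≤ K₁ * (Real.sqrt m * b) := by
            apply mul_le_mul_of_nonneg_left hchigh (le_of_lt hK₁0)
        _ = (K₁ * b) * Real.sqrt m := by ring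
        _ = a * Real.sqrt m := by rw [ha]
        _ ≤ |x k| * Real.sqrt m := by
            apply mul_le_mul_of_nonneg_right hka (le_of_lt (lt_of_lt_of_le hsm le_rfl))
    · rw [hyk, ← hK₁]
      rw [div_le_div_iff₀ hc0 hsm]
      calc |x k| * Real.sqrt m ≤ b * Real.sqrt m := by
            apply mul_le_mul_of_nonneg_right hkb (le_of_lt hsm)
        _ = K₁⁻¹ * (Real.sqrt m * (K₁ * b)) := by
            field_simp
        _ ≤ K₁⁻¹ * c := by
            apply mul_le_mul_of_nonneg_left _ (by positivity)
            rw [← ha]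
            calc Real.sqrt m * a = Real.sqrt m * a := rfl
              _ ≤ c := hclow
  · -- c * y k = x k on J
    intro k hk
    rw [hy]
    simp only [hk, if_pos]
    field_simp
  · -- y = 0 off J
    intro k hk
    rw [hy]; simp [hk]

/-- Reduction of the invertibility problem on incompressible vectors to a uniform
distance problem between `Zx` and the span `H_{J^c}` of the columns of `Z` outside `J`. -/
theorem stmt9 (ρ : ℝ) (hρ : ρ ∈ Set.Ioc (0:ℝ) 1) :
    ∃ c₂ : ℝ, 0 < c₂ ∧
      ∀ (Ω : Type) (_ : MeasurableSpace Ω) (μ : Measure Ω), IsProbabilityMeasure μ →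
      ∀ (N n d m : ℕ) (δ : ℝ) (Z : Ω → Matrix (Fin N) (Fin n) ℝ),
        δ ∈ Set.Ioc (0:ℝ) 1 → 1 ≤ d → 1 ≤ m → m ≤ n →
        (m : ℝ) ≤ min (d : ℝ) (ρ ^ 2 * δ * n / 2) →
        (∀ i k, Measurable fun ω => Z ω i k) →
        ∀ ε : ℝ, 0 < ε →
        (μ {ω | ∃ x ∈ incompVecs n δ ρ,
            ‖mulVecE (Z ω) x‖ < ε * ρ * Real.sqrt (m / (2 * n))}).toReal ≤
          (c₂ * δ) ^ (-(m : ℤ)) *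
            ⨆ J : {J : Finset (Fin n) // J.card = m},
              (μ {ω | ∃ x ∈ spreadVecs n (J : Finset (Fin n)) m δ ρ,
                Metric.infDist (mulVecE (Z ω) x)
                  (Submodule.span ℝ
                    {v : EucSp N | ∃ k ∉ (J : Finset (Fin n)), v = fun i => Z ω i k} :
                      Set (EucSp N)) < ε}).toReal := by
  classical
  have hρ0 : (0:ℝ) < ρ := hρ.1
  refine ⟨ρ^2 / (2 * Real.exp 1), by positivity, ?_⟩
  set c₂ : ℝ := ρ^2 / (2 * Real.exp 1) with hc₂
  intro Ω _ μ hμ N n d m δ Z hδ hd hm1 hmn hmmin hmeas ε hε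
  have hδ0 : (0:ℝ) < δ := hδ.1
  have hmρ : (m:ℝ) ≤ ρ^2*δ*n/2 := le_trans hmmin (min_le_right _ _)
  have hn1 : 1 ≤ n := le_trans hm1 hmn
  have hn : (0:ℝ) < n := by exact_mod_cast hn1
  have hm0 : (0:ℝ) < m := by exact_mod_cast hm1
  have he : (0:ℝ) < Real.exp 1 := Real.exp_pos 1
  set B : Set Ω := {ω | ∃ x ∈ incompVecs n δ ρ,
      ‖mulVecE (Z ω) x‖ < ε * ρ * Real.sqrt (m / (2 * n))} with hB
  set E : Finset (Fin n) → Set Ω := fun J => {ω | ∃ x ∈ spreadVecs n J m δ ρ,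
      Metric.infDist (mulVecE (Z ω) x)
        (Submodule.span ℝ {v : EucSp N | ∃ k ∉ J, v = fun i => Z ω i k} :
          Set (EucSp N)) < ε} with hE
  set t : Finset (Finset (Fin n)) := Finset.powersetCard m Finset.univ with ht
  set C : ℕ := n.choose m with hC
  have hC0 : (0:ℝ) < C := by exact_mod_cast Nat.choose_pos hmn
  have hcd0 : (0:ℝ) < c₂ * δ := by positivity
  set Kr : ℝ := (c₂*δ)^m * C with hKr
  have hKr0 : 0 < Kr := by positivity
  -- Step A: pointwise counting
  have key : ∀ ω ∈ B, ENNReal.ofReal Kr ≤ ((t.filter (fun J => ω ∈ E J)).card : ℝ≥0∞) := by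
    intro ω hω
    obtain ⟨x, hx, hZx⟩ := hω
    obtain ⟨σ, hσcard, hJprop⟩ := spread_exists hδ hρ hm1 hmn hmρ hx
    have hmσ : m ≤ σ.card := by
      have : (m:ℝ) ≤ (σ.card : ℝ) := le_trans hmρ hσcard
      exact_mod_cast this
    have hsub : Finset.powersetCard m σ ⊆ t.filter (fun J => ω ∈ E J) := by
      intro J hJ
      rw [Finset.mem_powersetCard] at hJ
      obtain ⟨hJσ, hJm⟩ := hJ
      rw [Finset.mem_filter]
      refine ⟨by rw [ht, Finset.mem_powersetCard]; exact ⟨Finset.subset_univ J, hJm⟩, ?_⟩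
      obtain ⟨c, y, hcl, hc0, hyspread, hcy, hy0⟩ := hJprop J hJσ hJm
      refine ⟨y, hyspread, ?_⟩
      set z : EucSp n := x - c • y with hz
      have hzJ : ∀ k ∈ J, z k = 0 := by
        intro k hk
        rw [hz]
        have : (x - c • y : EucSp n) k = x k - c * y k := by
          simp [PiLp.sub_apply, PiLp.smul_apply, smul_eq_mul]
        rw [this, ← hcy k hk]
        ring
      have hmem := mulVecE_mem_span (Z ω) J z hzJ
      set v : EucSp N := (-(1/c)) • mulVecE (Z ω) z with hv
      have hvmem : v ∈ (Submodule.span ℝ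
          {w : EucSp N | ∃ k ∉ J, w = fun i => Z ω i k} : Submodule ℝ (EucSp N)) :=
        Submodule.smul_mem _ _ hmem
      have hdist : Metric.infDist (mulVecE (Z ω) y)
          (Submodule.span ℝ {w : EucSp N | ∃ k ∉ J, w = fun i => Z ω i k} :
            Set (EucSp N)) ≤ dist (mulVecE (Z ω) y) v :=
        Metric.infDist_le_dist_of_mem hvmem
      have hrepr : mulVecE (Z ω) y - v = (1/c) • mulVecE (Z ω) x := by
        have hzz : mulVecE (Z ω) z = mulVecE (Z ω) x - c • mulVecE (Z ω) y := by
          rw [hz, mulVecE_sub, mulVecE_smul]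
        rw [hv, hzz]
        rw [smul_sub, smul_smul]
        have h1 : (-(1/c)) * c = -1 := by field_simp
        rw [h1, neg_smul, neg_smul, one_smul]
        abel
      have hnorm : dist (mulVecE (Z ω) y) v = ‖mulVecE (Z ω) x‖ / c := by
        rw [dist_eq_norm, hrepr, norm_smul, Real.norm_eq_abs,
          abs_of_pos (one_div_pos.2 hc0)]
        ring
      refine lt_of_le_of_lt hdist ?_
      rw [hnorm, div_lt_iff₀ hc0]
      calc ‖mulVecE (Z ω) x‖ < ε * ρ * Real.sqrt (m / (2 * n)) := hZx
        _ = ε * (ρ * Real.sqrt ((m:ℝ) / (2 * n))) := by ring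
        _ ≤ ε * c := mul_le_mul_of_nonneg_left hcl (le_of_lt hε)
    -- cardinality chain
    have hcard1 : (Finset.powersetCard m σ).card = (σ.card).choose m := by
      rw [Finset.card_powersetCard]
    have hreal : Kr ≤ ((σ.card).choose m : ℝ) := by
      set s : ℕ := σ.card with hs
      have h2 : ((s:ℝ)/m)^m ≤ (s.choose m : ℝ) := choose_lower hmσ
      have h3 : ((m:ℝ)/Real.exp 1)^m ≤ (m.factorial : ℝ) := fact_lower m
      have hfac0 : (0:ℝ) < ((m:ℝ)/Real.exp 1)^m := by positivity
      have h1 : (C:ℝ) ≤ (n:ℝ)^m / (m.factorial : ℝ) := by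
        rw [hC]; exact Nat.choose_le_pow_div m n
      have h4 : (n:ℝ)^m / (m.factorial : ℝ) ≤ (n:ℝ)^m / ((m:ℝ)/Real.exp 1)^m := by
        apply div_le_div_of_nonneg_left (by positivity) hfac0 h3
      have hbase : c₂*δ*((n:ℝ)/((m:ℝ)/Real.exp 1)) = ρ^2*δ*(n:ℝ)/(2*(m:ℝ)) := by
        rw [hc₂]
        field_simp
      have h5 : (c₂*δ)^m * ((n:ℝ)^m / ((m:ℝ)/Real.exp 1)^m) = (ρ^2*δ*(n:ℝ)/(2*(m:ℝ)))^m := by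
        rw [← hbase]
        ring
      have h6 : (ρ^2*δ*(n:ℝ)/(2*(m:ℝ)))^m ≤ ((s:ℝ)/m)^m := by
        apply pow_le_pow_left₀ (by positivity)
        rw [div_le_div_iff₀ (by positivity) hm0]
        have : ρ^2*δ*(n:ℝ)/2 ≤ (s:ℝ) := le_trans (le_of_eq (by ring)) (le_trans hσcard le_rfl)
        nlinarith [this, hm0]
      calc Kr = (c₂*δ)^m * (C:ℝ) := hKr
        _ ≤ (c₂*δ)^m * ((n:ℝ)^m / (m.factorial : ℝ)) := by
            apply mul_le_mul_of_nonneg_left h1 (by positivity)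
        _ ≤ (c₂*δ)^m * ((n:ℝ)^m / ((m:ℝ)/Real.exp 1)^m) := by
            apply mul_le_mul_of_nonneg_left h4 (by positivity)
        _ = (ρ^2*δ*(n:ℝ)/(2*(m:ℝ)))^m := h5
        _ ≤ ((s:ℝ)/m)^m := h6
        _ ≤ (s.choose m : ℝ) := h2
    calc ENNReal.ofReal Kr ≤ ENNReal.ofReal ((σ.card).choose m : ℝ) :=
          ENNReal.ofReal_le_ofReal hreal
      _ = ((σ.card).choose m : ℝ≥0∞) := ENNReal.ofReal_natCast _
      _ = ((Finset.powersetCard m σ).card : ℝ≥0∞) := by rw [hcard1]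
      _ ≤ ((t.filter (fun J => ω ∈ E J)).card : ℝ≥0∞) := by
          exact_mod_cast Nat.cast_le.2 (Finset.card_le_card hsub)
  -- Step B: counting measure bound
  have hKB := count_measure μ t E B (ENNReal.ofReal Kr) key
  -- Step C: sum vs sup
  have hJ0 : Nonempty {J : Finset (Fin n) // J.card = m} := by
    obtain ⟨J₀, _, hJ₀⟩ := Finset.exists_subset_card_eq
      (show m ≤ (Finset.univ : Finset (Fin n)).card by
        simpa using hmn)
    exact ⟨⟨J₀, hJ₀⟩⟩
  set Smax : ℝ := ⨆ J : {J : Finset (Fin n) // J.card = m}, (μ (E J)).toReal with hSmax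
  have hub : ∀ J : {J : Finset (Fin n) // J.card = m}, (μ (E J)).toReal ≤ Smax := by
    intro J
    rw [hSmax]
    exact le_ciSup (f := fun J : {J : Finset (Fin n) // J.card = m} => (μ (E ↑J)).toReal)
      (Set.Finite.bddAbove (Set.finite_range _)) J
  have hSnn : 0 ≤ Smax := le_trans ENNReal.toReal_nonneg (hub (Classical.arbitrary _))
  have hsum : ∑ J ∈ t, μ (E J) ≤ (C : ℝ≥0∞) * ENNReal.ofReal Smax := by
    have ht' : ∀ J ∈ t, μ (E J) ≤ ENNReal.ofReal Smax := by
      intro J hJ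
      rw [ht, Finset.mem_powersetCard] at hJ
      have := hub ⟨J, hJ.2⟩
      rw [ENNReal.le_ofReal_iff_toReal_le (measure_ne_top μ _) hSnn]
      exact this
    calc ∑ J ∈ t, μ (E J) ≤ ∑ _J ∈ t, ENNReal.ofReal Smax := Finset.sum_le_sum ht'
      _ = (t.card : ℝ≥0∞) * ENNReal.ofReal Smax := by
          rw [Finset.sum_const, nsmul_eq_mul]
      _ = (C : ℝ≥0∞) * ENNReal.ofReal Smax := by
          rw [ht, Finset.card_powersetCard, Finset.card_univ, Fintype.card_fin, hC]
  have hmain : ENNReal.ofReal Kr * μ B ≤ (C : ℝ≥0∞) * ENNReal.ofReal Smax :=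
    le_trans hKB hsum
  -- convert to reals
  have hfin : (C : ℝ≥0∞) * ENNReal.ofReal Smax ≠ ⊤ := by
    apply ENNReal.mul_ne_top (ENNReal.natCast_ne_top C) ENNReal.ofReal_ne_top
  have hreal2 : Kr * (μ B).toReal ≤ (C:ℝ) * Smax := by
    have := ENNReal.toReal_mono hfin hmain
    rw [ENNReal.toReal_mul, ENNReal.toReal_mul, ENNReal.toReal_ofReal (le_of_lt hKr0),
      ENNReal.toReal_natCast, ENNReal.toReal_ofReal hSnn] at this
    exact this
  have hgoal : (μ B).toReal ≤ (c₂ * δ) ^ (-(m : ℤ)) * Smax := by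
    have hz : (c₂ * δ) ^ (-(m : ℤ)) = ((c₂*δ)^m)⁻¹ := by
      rw [zpow_neg, zpow_natCast]
    rw [hz]
    rw [hKr] at hreal2
    have hp : (0:ℝ) < (c₂*δ)^m := by positivity
    rw [← mul_le_mul_iff_right₀ hp]
    have heq : (c₂*δ)^m * (((c₂*δ)^m)⁻¹ * Smax) = Smax := by field_simp
    rw [heq, ← mul_le_mul_iff_left₀ hC0]
    calc (c₂*δ)^m * (μ B).toReal * C = (c₂*δ)^m * C * (μ B).toReal := by ring
      _ ≤ (C:ℝ) * Smax := hreal2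
      _ = Smax * C := by ring
  exact hgoal
end
end

section
/- For every δ, ρ ∈ (0,1), there exist c₁(δ,ρ) > 0 and c₂(δ) > 0 such that for every incompressible vector a ∈ Incomp_M(δ,ρ), every 0 < c < c₁(δ,ρ), and every α > 0, one has LCD_{α,c}(a) > c₂(δ)√M. -/
open MeasureTheory ProbabilityTheory Real
open scoped ENNReal Classical

noncomputable section

/-- The integer lattice `ℤ^M` inside `ℝ^M`. -/
def intPoints (M : ℕ) : Set (EucSp M) := {y | ∀ i, ∃ z : ℤ, y i = (z : ℝ)}

/-- The least common denominator of a vector `a ∈ ℝ^M`. -/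
def LCD {M : ℕ} (α γ : ℝ) (a : EucSp M) : ℝ :=
  sInf {θ : ℝ | 0 < θ ∧ Metric.infDist (θ • a) (intPoints M) < min (γ * ‖θ • a‖) α}


lemma norm_sq_eq' {M : ℕ} (v : EucSp M) : ‖v‖ = Real.sqrt (∑ i, (v i)^2) := by
  rw [EuclideanSpace.norm_eq]
  congr 1
  refine Finset.sum_congr rfl fun i _ => ?_
  rw [Real.norm_eq_abs, sq_abs]

lemma dirichlet' {M : ℕ} (hM : 1 ≤ M) (a : EucSp M) (ε : ℝ) (hε : 0 < ε) :
    ∃ θ : ℝ, 1 ≤ θ ∧ Metric.infDist (θ • a) (intPoints M) < ε := by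
  set Q : ℕ := ⌈Real.sqrt M / ε⌉₊ + 1 with hQdef
  have hQpos : (0:ℝ) < Q := by positivity
  have hQε : Real.sqrt M / Q < ε := by
    rw [div_lt_iff₀ hQpos]
    have h1 : Real.sqrt M / ε < Q := by
      calc Real.sqrt M / ε ≤ ⌈Real.sqrt M / ε⌉₊ := Nat.le_ceil _
        _ < Q := by exact_mod_cast Nat.lt_succ_self _
    calc Real.sqrt M = (Real.sqrt M / ε) * ε := by field_simp
      _ < Q * ε := by apply mul_lt_mul_of_pos_right h1 hε
      _ = ε * Q := mul_comm _ _
  have hfb : ∀ (n : ℕ) (i : Fin M), (⌊(Q:ℝ) * Int.fract ((n:ℝ) * a i)⌋).toNat < Q := by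
    intro n i
    rw [Int.toNat_lt' (by omega)]
    apply Int.floor_lt.2
    have h1 := Int.fract_lt_one ((n:ℝ) * a i)
    push_cast
    nlinarith [Int.fract_nonneg ((n:ℝ) * a i)]
  set f : Fin (Q^M + 1) → (Fin M → Fin Q) :=
    fun n i => ⟨(⌊(Q:ℝ) * Int.fract (((n:ℕ):ℝ) * a i)⌋).toNat, hfb n i⟩ with hf
  obtain ⟨n₁, n₂, hne, heq⟩ := Fintype.exists_ne_map_eq_of_card_lt f (by
    simp [Fintype.card_fun])
  wlog hlt : (n₁ : ℕ) < (n₂ : ℕ) generalizing n₁ n₂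
  · exact this n₂ n₁ hne.symm heq.symm
      (lt_of_le_of_ne (not_lt.1 hlt) (fun h => hne (Fin.ext h.symm)))
  set k : ℕ := (n₂ : ℕ) - (n₁ : ℕ) with hk
  have hk1 : 1 ≤ k := by omega
  refine ⟨(k : ℝ), by exact_mod_cast hk1, ?_⟩
  set y : EucSp M := WithLp.toLp 2 (fun i => ((⌊((n₂:ℕ):ℝ) * a i⌋ - ⌊((n₁:ℕ):ℝ) * a i⌋ : ℤ) : ℝ)) with hy
  have hymem : y ∈ intPoints M := fun i => ⟨_, rfl⟩
  have hcoord : ∀ i, |((k:ℝ) • a - y) i| < 1 / Q := by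
    intro i
    have hfi : (⌊(Q:ℝ) * Int.fract (((n₁:ℕ):ℝ) * a i)⌋) = ⌊(Q:ℝ) * Int.fract (((n₂:ℕ):ℝ) * a i)⌋ := by
      have h2 := congrFun heq i
      simp only [hf, Fin.mk.injEq] at h2
      have hn1 : 0 ≤ ⌊(Q:ℝ) * Int.fract (((n₁:ℕ):ℝ) * a i)⌋ :=
        Int.floor_nonneg.2 (mul_nonneg hQpos.le (Int.fract_nonneg _))
      have hn2 : 0 ≤ ⌊(Q:ℝ) * Int.fract (((n₂:ℕ):ℝ) * a i)⌋ :=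
        Int.floor_nonneg.2 (mul_nonneg hQpos.le (Int.fract_nonneg _))
      omega
    have habs : |(Q:ℝ) * Int.fract (((n₁:ℕ):ℝ) * a i) - (Q:ℝ) * Int.fract (((n₂:ℕ):ℝ) * a i)| < 1 :=
      Int.abs_sub_lt_one_of_floor_eq_floor hfi
    have hval : ((k:ℝ) • a - y) i = Int.fract (((n₂:ℕ):ℝ) * a i) - Int.fract (((n₁:ℕ):ℝ) * a i) := by
      have hkc : (k:ℝ) = ((n₂:ℕ):ℝ) - ((n₁:ℕ):ℝ) := by
        rw [hk]; push_cast [Nat.cast_sub hlt.le]; ring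
      simp only [PiLp.sub_apply, PiLp.smul_apply, smul_eq_mul, hy, PiLp.toLp_apply]
      rw [hkc, Int.fract, Int.fract]
      push_cast
      ring
    rw [hval]
    calc |Int.fract (((n₂:ℕ):ℝ) * a i) - Int.fract (((n₁:ℕ):ℝ) * a i)|
        = |(Q:ℝ) * Int.fract (((n₁:ℕ):ℝ) * a i) - (Q:ℝ) * Int.fract (((n₂:ℕ):ℝ) * a i)| / Q := by
          rw [← mul_sub, abs_mul, abs_of_pos hQpos, mul_div_cancel_left₀ _ hQpos.ne', abs_sub_comm]
      _ < 1 / Q := by gcongr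
  have hnorm : ‖(k:ℝ) • a - y‖ < Real.sqrt M / Q := by
    rw [norm_sq_eq']
    have hsum : ∑ i, (((k:ℝ) • a - y) i)^2 < ∑ _i : Fin M, (1/Q:ℝ)^2 := by
      apply Finset.sum_lt_sum_of_nonempty
      · exact Finset.univ_nonempty_iff.2 (Fin.pos_iff_nonempty.1 (by omega))
      · intro i _
        have h := hcoord i
        calc (((k:ℝ) • a - y) i)^2 = |((k:ℝ) • a - y) i|^2 := (sq_abs _).symm
          _ < (1/Q:ℝ)^2 := by
              apply pow_lt_pow_left₀ h (abs_nonneg _) (by norm_num)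
    calc Real.sqrt (∑ i, (((k:ℝ) • a - y) i)^2)
        < Real.sqrt (∑ _i : Fin M, (1/Q:ℝ)^2) := by
          apply Real.sqrt_lt_sqrt (Finset.sum_nonneg fun i _ => sq_nonneg _) hsum
      _ = Real.sqrt M / Q := by
          rw [Finset.sum_const, Finset.card_univ, Fintype.card_fin, nsmul_eq_mul,
            Real.sqrt_mul (by positivity), Real.sqrt_sq (by positivity)]
          ring
  calc Metric.infDist ((k:ℝ) • a) (intPoints M) ≤ dist ((k:ℝ) • a) y :=
        Metric.infDist_le_dist_of_mem hymem
    _ = ‖(k:ℝ) • a - y‖ := dist_eq_norm _ _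
    _ < Real.sqrt M / Q := hnorm
    _ < ε := hQε

lemma incomp_struct' {M : ℕ} {δ ρ : ℝ} (hδ : δ ∈ Set.Ioo (0:ℝ) 1) (hρ : ρ ∈ Set.Ioo (0:ℝ) 1)
    (hM : 1 ≤ M) (a : EucSp M) (ha : a ∈ incompVecs M δ ρ) :
    ρ^2/2 ≤ ∑ i ∈ Finset.univ.filter
      (fun i => |a i| ≤ 1/Real.sqrt (δ*M) ∧ ρ/Real.sqrt (2*M) ≤ |a i|), (a i)^2 := by
  obtain ⟨hnorm, hdist⟩ := ha
  have hMpos : (0:ℝ) < M := by exact_mod_cast hM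
  have hδM : (0:ℝ) < δ * M := mul_pos hδ.1 hMpos
  have hsum1 : ∑ i, (a i)^2 = 1 := by
    have := hnorm
    rw [norm_sq_eq', Real.sqrt_eq_one] at this
    exact this
  set B : Finset (Fin M) := Finset.univ.filter (fun i => 1/Real.sqrt (δ*M) < |a i|) with hB
  have hBbound : ∀ i ∈ B, 1/(δ*M) ≤ (a i)^2 := by
    intro i hi
    rw [hB, Finset.mem_filter] at hi
    have h1 : (1/Real.sqrt (δ*M))^2 ≤ |a i|^2 :=
      pow_le_pow_left₀ (by positivity) hi.2.le 2
    rw [div_pow, one_pow, Real.sq_sqrt hδM.le, sq_abs] at h1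
    exact h1
  have hBcard : (B.card : ℝ) ≤ δ * M := by
    have h1 : (B.card : ℝ) * (1/(δ*M)) ≤ ∑ i ∈ B, (a i)^2 := by
      have := Finset.card_nsmul_le_sum B (fun i => (a i)^2) (1/(δ*M)) hBbound
      simpa [nsmul_eq_mul] using this
    have h2 : ∑ i ∈ B, (a i)^2 ≤ 1 := by
      rw [← hsum1]
      exact Finset.sum_le_sum_of_subset_of_nonneg (Finset.subset_univ _)
        (fun i _ _ => sq_nonneg _)
    have h3 : (B.card : ℝ) * (1/(δ*M)) ≤ 1 := h1.trans h2
    calc (B.card : ℝ) = ((B.card : ℝ) * (1/(δ*M))) * (δ*M) := by rw [mul_assoc, one_div, inv_mul_cancel₀ hδM.ne', mul_one]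
      _ ≤ 1 * (δ*M) := mul_le_mul_of_nonneg_right h3 hδM.le
      _ = δ * M := one_mul _
  set y : EucSp M := WithLp.toLp 2 (fun i => if i ∈ B then a i else 0) with hy
  have hymem : y ∈ sparseVecs M δ := by
    show (Nat.card {i : Fin M // y i ≠ 0} : ℝ) ≤ δ * M
    have h1 : Nat.card {i : Fin M // y i ≠ 0} ≤ B.card := by
      rw [Nat.card_eq_fintype_card, Fintype.card_subtype]
      apply Finset.card_le_card
      intro i hi
      rw [Finset.mem_filter] at hi
      by_contra hib
      exact hi.2 (by simp [hy, hib])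
    exact le_trans (by exact_mod_cast h1) hBcard
  have hρd : ρ < ‖a - y‖ := by
    calc ρ < Metric.infDist a (sparseVecs M δ) := hdist
      _ ≤ dist a y := Metric.infDist_le_dist_of_mem hymem
      _ = ‖a - y‖ := dist_eq_norm _ _
  have hcompl : ρ^2 < ∑ i ∈ Finset.univ.filter (fun i => ¬(1/Real.sqrt (δ*M) < |a i|)), (a i)^2 := by
    have h1 : ∑ i, ((a - y) i)^2
        = ∑ i ∈ Finset.univ.filter (fun i => ¬(1/Real.sqrt (δ*M) < |a i|)), (a i)^2 := by
      rw [← Finset.sum_filter_add_sum_filter_not Finset.univ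
        (fun i => 1/Real.sqrt (δ*M) < |a i|) (fun i => ((a - y) i)^2)]
      have hz : ∑ i ∈ B, ((a - y) i)^2 = 0 := by
        apply Finset.sum_eq_zero
        intro i hi
        simp [PiLp.sub_apply, hy, if_pos (by exact hi : i ∈ B)]
      rw [hB] at hz
      rw [hz, zero_add]
      apply Finset.sum_congr rfl
      intro i hi
      rw [Finset.mem_filter] at hi
      have hib : i ∉ B := by rw [hB, Finset.mem_filter]; tauto
      simp [PiLp.sub_apply, hy, if_neg hib]
    rw [norm_sq_eq'] at hρd
    rw [← h1]
    exact (Real.lt_sqrt hρ.1.le).1 hρd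
  set P : Fin M → Prop := fun i => ¬(1/Real.sqrt (δ*M) < |a i|) with hP
  have hsplit := Finset.sum_filter_add_sum_filter_not
    (Finset.univ.filter P) (fun i => ρ/Real.sqrt (2*M) ≤ |a i|) (fun i => (a i)^2)
  have hsmall : ∑ i ∈ (Finset.univ.filter P).filter
      (fun i => ¬(ρ/Real.sqrt (2*M) ≤ |a i|)), (a i)^2 ≤ ρ^2/2 := by
    have h2M : (0:ℝ) < 2*M := by positivity
    have hub : ∀ i ∈ (Finset.univ.filter P).filter
        (fun i => ¬(ρ/Real.sqrt (2*M) ≤ |a i|)), (a i)^2 ≤ ρ^2/(2*M) := by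
      intro i hi
      rw [Finset.mem_filter] at hi
      have h1 : |a i| < ρ/Real.sqrt (2*M) := not_le.1 hi.2
      have h2 : |a i|^2 ≤ (ρ/Real.sqrt (2*M))^2 := pow_le_pow_left₀ (abs_nonneg _) h1.le 2
      rw [sq_abs, div_pow, Real.sq_sqrt h2M.le] at h2
      exact h2
    calc ∑ i ∈ (Finset.univ.filter P).filter
          (fun i => ¬(ρ/Real.sqrt (2*M) ≤ |a i|)), (a i)^2
        ≤ ((Finset.univ.filter P).filter
          (fun i => ¬(ρ/Real.sqrt (2*M) ≤ |a i|))).card • (ρ^2/(2*M)) :=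
          Finset.sum_le_card_nsmul _ _ _ hub
      _ ≤ (M:ℝ) * (ρ^2/(2*M)) := by
          rw [nsmul_eq_mul]
          apply mul_le_mul_of_nonneg_right _ (by positivity)
          calc (((Finset.univ.filter P).filter _).card : ℝ) ≤ (Finset.univ : Finset (Fin M)).card := by
                exact_mod_cast Finset.card_le_card (Finset.filter_subset _ _ |>.trans (Finset.filter_subset _ _))
            _ = M := by simp
      _ = ρ^2/2 := by field_simp
  have hkey : ρ^2 < ∑ i ∈ (Finset.univ.filter P).filter
      (fun i => ρ/Real.sqrt (2*M) ≤ |a i|), (a i)^2 + ρ^2/2 := by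
    linarith [hsplit, hcompl, hsmall]
  have hset : (Finset.univ.filter P).filter (fun i => ρ/Real.sqrt (2*M) ≤ |a i|)
      = Finset.univ.filter
        (fun i => |a i| ≤ 1/Real.sqrt (δ*M) ∧ ρ/Real.sqrt (2*M) ≤ |a i|) := by
    rw [Finset.filter_filter]
    apply Finset.filter_congr
    intro i _
    simp [hP, not_lt]
  rw [← hset]
  linarith [hkey]

/-- Incompressible vectors have least common denominator of order at least `√M`. -/
theorem stmt11 (δ ρ : ℝ) (hδ : δ ∈ Set.Ioo (0:ℝ) 1) (hρ : ρ ∈ Set.Ioo (0:ℝ) 1) :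
    ∃ c₁ c₂ : ℝ, 0 < c₁ ∧ 0 < c₂ ∧
      ∀ (M : ℕ) (a : EucSp M), a ∈ incompVecs M δ ρ →
        ∀ c α : ℝ, 0 < c → c < c₁ → 0 < α →
          c₂ * Real.sqrt M < LCD α c a := by
  obtain ⟨hδ0, hδ1⟩ := hδ
  obtain ⟨hρ0, hρ1⟩ := hρ
  refine ⟨ρ/2, Real.sqrt δ/4, by positivity, by positivity, ?_⟩
  intro M a ha c α hc hcc hα
  have hM : 1 ≤ M := by
    by_contra h
    have hM0 : M = 0 := by omega
    subst hM0
    have h0 : a = 0 := Subsingleton.elim a 0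
    have := ha.1
    rw [h0, norm_zero] at this
    norm_num at this
  have hMpos : (0:ℝ) < M := by exact_mod_cast hM
  have hsqM : (1:ℝ) ≤ Real.sqrt M := by
    rw [show (1:ℝ) = Real.sqrt 1 from Real.sqrt_one.symm]
    exact Real.sqrt_le_sqrt (by exact_mod_cast hM)
  have hna : ‖a‖ = 1 := ha.1
  have hnormθ : ∀ θ : ℝ, 0 < θ → ‖θ • a‖ = θ := by
    intro θ hθ
    rw [norm_smul, hna, mul_one, Real.norm_eq_abs, abs_of_pos hθ]
  set T := {θ : ℝ | 0 < θ ∧ Metric.infDist (θ • a) (intPoints M) < min (c * ‖θ • a‖) α} with hT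
  -- T is nonempty by (a pigeonhole form of) Dirichlet's theorem
  obtain ⟨θ₀, hθ₀1, hθ₀d⟩ := dirichlet' hM a (min c α) (lt_min hc hα)
  have hθ₀pos : (0:ℝ) < θ₀ := lt_of_lt_of_le one_pos hθ₀1
  have hTne : T.Nonempty := by
    refine ⟨θ₀, hθ₀pos, ?_⟩
    rw [hnormθ θ₀ hθ₀pos]
    refine lt_of_lt_of_le hθ₀d (le_min ?_ (min_le_right _ _))
    calc min c α ≤ c := min_le_left _ _
      _ = c * 1 := (mul_one c).symm
      _ ≤ c * θ₀ := mul_le_mul_of_nonneg_left hθ₀1 hc.le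
  -- every element of T is at least √(δM)/2
  have hlb : ∀ θ ∈ T, Real.sqrt (δ*M)/2 ≤ θ := by
    intro θ hθmem
    obtain ⟨hθpos, hθd⟩ := hθmem
    by_contra hcon
    push_neg at hcon
    have h0mem : (0 : EucSp M) ∈ intPoints M := fun i => ⟨0, by simp⟩
    have hlt : Metric.infDist (θ • a) (intPoints M) < c * θ := by
      rw [hnormθ θ hθpos] at hθd
      exact lt_of_lt_of_le hθd (min_le_left _ _)
    obtain ⟨y, hymem, hdy⟩ := (Metric.infDist_lt_iff ⟨0, h0mem⟩).1 hlt
    have hS := incomp_struct' ⟨hδ0, hδ1⟩ ⟨hρ0, hρ1⟩ hM a ha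
    set S := Finset.univ.filter
      (fun i => |a i| ≤ 1/Real.sqrt (δ*M) ∧ ρ/Real.sqrt (2*M) ≤ |a i|) with hSdef
    have hδMpos : (0:ℝ) < δ * M := mul_pos hδ0 hMpos
    have hcoordlb : ∀ i ∈ S, (θ * a i)^2 ≤ ((θ • a - y) i)^2 := by
      intro i hi
      rw [hSdef, Finset.mem_filter] at hi
      obtain ⟨z, hz⟩ := hymem i
      have hup : |θ * a i| ≤ 1/2 := by
        rw [abs_mul, abs_of_pos hθpos]
        calc θ * |a i| ≤ (Real.sqrt (δ*M)/2) * (1/Real.sqrt (δ*M)) :=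
              mul_le_mul hcon.le hi.2.1 (abs_nonneg _) (by positivity)
          _ = 1/2 := by
              rw [div_mul_div_comm, mul_one]
              rw [div_eq_div_iff (by positivity) (by norm_num)]
              ring
      have hcomp : |θ * a i| ≤ |θ * a i - z| := by
        rcases eq_or_ne z 0 with rfl | hz0
        · simp
        · have h1 : (1:ℝ) ≤ |(z:ℝ)| := by exact_mod_cast Int.one_le_abs hz0
          have h2 : |(z:ℝ)| - |θ * a i| ≤ |θ * a i - z| := by
            calc |(z:ℝ)| - |θ * a i| ≤ |(z:ℝ) - θ * a i| := abs_sub_abs_le_abs_sub _ _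
              _ = |θ * a i - z| := abs_sub_comm _ _
          linarith
      have heval : ((θ • a - y) i) = θ * a i - z := by
        simp [PiLp.sub_apply, PiLp.smul_apply, smul_eq_mul, hz]
      rw [heval, ← sq_abs (θ * a i), ← sq_abs (θ * a i - z)]
      exact pow_le_pow_left₀ (abs_nonneg _) hcomp 2
    have hsum_lb : θ^2 * (ρ^2/2) ≤ ∑ i, ((θ • a - y) i)^2 := by
      calc θ^2 * (ρ^2/2) ≤ θ^2 * ∑ i ∈ S, (a i)^2 :=
            mul_le_mul_of_nonneg_left hS (sq_nonneg θ)
        _ = ∑ i ∈ S, (θ * a i)^2 := by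
            rw [Finset.mul_sum]
            exact Finset.sum_congr rfl fun i _ => by ring
        _ ≤ ∑ i ∈ S, ((θ • a - y) i)^2 := Finset.sum_le_sum hcoordlb
        _ ≤ ∑ i, ((θ • a - y) i)^2 :=
            Finset.sum_le_sum_of_subset_of_nonneg (Finset.subset_univ _)
              (fun i _ _ => sq_nonneg _)
    have hdistlb : θ * (ρ/Real.sqrt 2) ≤ dist (θ • a) y := by
      rw [dist_eq_norm, norm_sq_eq']
      calc θ * (ρ/Real.sqrt 2) = Real.sqrt (θ^2 * (ρ^2/2)) := by
            rw [Real.sqrt_mul (sq_nonneg θ), Real.sqrt_sq hθpos.le,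
              show (ρ^2/2 : ℝ) = (ρ/Real.sqrt 2)^2 by
                rw [div_pow, Real.sq_sqrt (by norm_num : (0:ℝ) ≤ 2)],
              Real.sqrt_sq (by positivity)]
        _ ≤ Real.sqrt (∑ i, ((θ • a - y) i)^2) := Real.sqrt_le_sqrt hsum_lb
    have hs2lt : Real.sqrt 2 < 2 := by
      have h1 : Real.sqrt 2 < Real.sqrt 4 := Real.sqrt_lt_sqrt (by norm_num) (by norm_num)
      have h4 : Real.sqrt 4 = 2 := by
        rw [show (4:ℝ) = 2^2 by norm_num, Real.sqrt_sq (by norm_num)]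
      linarith
    have hρcomp : c < ρ/Real.sqrt 2 := by
      have h1 : ρ/2 < ρ/Real.sqrt 2 := by
        apply div_lt_div_of_pos_left hρ0 (by positivity) hs2lt
      linarith
    have hfinal : c * θ < θ * (ρ/Real.sqrt 2) := by
      rw [mul_comm θ (ρ/Real.sqrt 2)]
      exact mul_lt_mul_of_pos_right hρcomp hθpos
    linarith [hdy, hdistlb, hfinal]
  have hsInf : Real.sqrt (δ*M)/2 ≤ sInf T := le_csInf hTne hlb
  show Real.sqrt δ/4 * Real.sqrt M < sInf T
  calc Real.sqrt δ/4 * Real.sqrt M < Real.sqrt δ/2 * Real.sqrt M := by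
        have hpos : 0 < Real.sqrt δ * Real.sqrt M := by positivity
        nlinarith
    _ = Real.sqrt (δ*M)/2 := by rw [Real.sqrt_mul hδ0.le]; ring
    _ ≤ sInf T := hsInf
end
end

section
/- Fix constants δ, ρ ∈ (0,1), and assume the setting of the structure theorem: Ỹ^T − B̃ is an (N−l)×M random matrix with ‖Ỹ^T − B̃‖ ≤ C₁√N, l ≤ βN, satisfying the single-vector small ball bound P(‖(Ỹ^T − B̃)x‖_2 < t√N) ≤ (Ct + C/D + Ce^{−cα²})^{N−l} for each x in the level set S_D, and assume the level set S_D admits a (4α/D)-net of cardinality at most (CD/√N)^N. Then there exist c₃, c₄, μ ∈ (0,1) such that if α = μ√N ≥ 1 and D ≤ c₃√N·e^{c₃N/l}, then P( inf_{x ∈ S_D} ‖(Ỹ^T − B̃)x‖_2 < c₄N/D ) ≤ e^{−N}. -/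
open MeasureTheory ProbabilityTheory Real Matrix
open scoped ENNReal Classical

noncomputable section

/-- The level set `S_D` of incompressible unit vectors with LCD of order `D`,
intersected with the subspace `P^T ℝ^N`. -/
def levelSet (M N : ℕ) (P : Matrix (Fin N) (Fin M) ℝ) (α c δ ρ D : ℝ) : Set (EucSp M) :=
  {x | x ∈ incompVecs M δ ρ ∧ D ≤ LCD α c x ∧ LCD α c x < 2 * D ∧
    ∃ v : EucSp N, x = mulVecE Pᵀ v}

set_option maxHeartbeats 1000000 in
private lemma mulVecE_norm_le {n m : ℕ} (A : Matrix (Fin m) (Fin n) ℝ) (v : EucSp n) :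
    ‖mulVecE A v‖ ≤ opNormM A * ‖v‖ := by
  have hcont : Continuous (fun x : EucSp n => mulVecE A x) := by
    exact LinearMap.continuous_of_finiteDimensional
      ({ toFun := mulVecE A,
         map_add' := fun x y => by
           show WithLp.toLp 2 (A.mulVec (x.ofLp + y.ofLp)) = WithLp.toLp 2 (A.mulVec x.ofLp + A.mulVec y.ofLp)
           rw [Matrix.mulVec_add],
         map_smul' := fun c x => by
           show WithLp.toLp 2 (A.mulVec (c • x.ofLp)) = WithLp.toLp 2 (c • A.mulVec x.ofLp)
           rw [Matrix.mulVec_smul] } : EucSp n →ₗ[ℝ] EucSp m)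
  rcases eq_or_ne v 0 with rfl | hv
  · have : mulVecE A 0 = 0 := by
      show WithLp.toLp 2 (A.mulVec (0 : Fin n → ℝ)) = WithLp.toLp 2 (0 : Fin m → ℝ); rw [Matrix.mulVec_zero]
    simp [this]
  · have hvn : ‖v‖ ≠ 0 := norm_ne_zero_iff.2 hv
    set u : EucSp n := ‖v‖⁻¹ • v with hu_def
    have hu : ‖u‖ = 1 := norm_smul_inv_norm hv
    have humem : u ∈ Metric.sphere (0 : EucSp n) 1 := by
      simp [mem_sphere_zero_iff_norm, hu]
    have hbdd : BddAbove (Set.range fun x : Metric.sphere (0 : EucSp n) 1 => ‖mulVecE A x‖) := by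
      have h1 : (Set.range fun x : Metric.sphere (0 : EucSp n) 1 => ‖mulVecE A x‖)
          = (fun v : EucSp n => ‖mulVecE A v‖) '' (Metric.sphere (0 : EucSp n) 1) := by
        rw [show (fun x : Metric.sphere (0 : EucSp n) 1 => ‖mulVecE A ↑x‖)
            = (fun v : EucSp n => ‖mulVecE A v‖) ∘ Subtype.val from rfl, Set.range_comp,
          Subtype.range_coe]
      rw [h1]
      exact (isCompact_sphere (0 : EucSp n) 1).bddAbove_image (hcont.norm.continuousOn)
    have hle : ‖mulVecE A u‖ ≤ opNormM A := le_ciSup hbdd ⟨u, humem⟩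
    have hlin : mulVecE A v = ‖v‖ • mulVecE A u := by
      show WithLp.toLp 2 (A.mulVec v.ofLp) = WithLp.toLp 2 (‖v‖ • A.mulVec (‖v‖⁻¹ • v.ofLp))
      rw [Matrix.mulVec_smul, smul_smul, mul_inv_cancel₀ hvn, one_smul]
    rw [hlin, norm_smul, Real.norm_of_nonneg (norm_nonneg v), mul_comm]
    exact mul_le_mul_of_nonneg_right hle (norm_nonneg v)


set_option maxHeartbeats 1000000 in
private lemma estimate17 (CC cc C₁ β c₃ c₄ μ₀ : ℝ) (N l : ℕ) (D : ℝ)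
    (hCC : 0 < CC) (hcc : 0 < cc) (hC₁ : 0 < C₁)
    (hβ0 : 0 < β) (hβ1 : β < 1)
    (hμ0 : 0 < μ₀) (hμh : μ₀ ≤ 1/2) (hc₄0 : 0 < c₄)
    (hγ1 : 2 * (CC * (c₄ + (4*C₁+1) * μ₀)) ≤ 1)
    (hγ2 : CC * (2 * (CC * (c₄ + (4*C₁+1) * μ₀))) ^ (1-β) ≤ Real.exp (-3))
    (hc₃0 : 0 < c₃) (hc₃1 : c₃ ≤ 1)
    (hc₃c : c₃ ≤ cc * μ₀^2 * (1-β))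
    (hc₃d : c₃ * (CC * max (2*CC) 1) ≤ Real.exp (-2))
    (hl1 : 1 ≤ l) (hlN : (l:ℝ) ≤ β * N)
    (hD : 0 < D) (hDle : D ≤ c₃ * Real.sqrt N * Real.exp (c₃ * N / l))
    (hα : 1 ≤ μ₀ * Real.sqrt N) :
    (CC * D / Real.sqrt N) ^ N *
      (CC * ((c₄ + 4*C₁*μ₀) * Real.sqrt N / D) + CC / D +
        CC * Real.exp (-cc * (μ₀ * Real.sqrt N) ^ 2)) ^ (N - l) ≤ Real.exp (-(N:ℝ)) := by
  set s := Real.sqrt N with hs_def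
  have hsnn : 0 ≤ s := Real.sqrt_nonneg N
  have hs2 : 2 ≤ s := by
    have h := mul_le_mul_of_nonneg_right hμh hsnn
    linarith
  have hspos : 0 < s := by linarith
  have hss : s * s = (N:ℝ) := Real.mul_self_sqrt (Nat.cast_nonneg N)
  have hN4 : (4:ℝ) ≤ (N:ℝ) := by
    have h := mul_le_mul hs2 hs2 (by norm_num) (by linarith : (0:ℝ) ≤ s)
    linarith
  have hNpos : (0:ℝ) < N := by linarith
  have hNpos' : (0:ℝ) < N := by linarith
  have hllt : (l:ℝ) < N := by
    have h := mul_lt_mul_of_pos_right hβ1 hNpos'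
    linarith
  have hlle : l ≤ N := le_of_lt (by exact_mod_cast hllt)
  have hlpos : (0:ℝ) < l := by exact_mod_cast hl1
  set k := N - l with hk_def
  have hkl : k + l = N := Nat.sub_add_cancel hlle
  have hkcast : (k:ℝ) = (N:ℝ) - l := by
    rw [hk_def, Nat.cast_sub hlle]
  set γ := CC * (c₄ + (4*C₁+1) * μ₀) with hγ_def
  have hγpos : 0 < γ := by positivity
  set a := CC * (c₄ + 4*C₁*μ₀) * s + CC with ha_def
  set b := CC * Real.exp (-cc * (μ₀ * s) ^ 2) with hb_def
  have ha_pos : 0 < a := by positivity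
  have hb_pos : 0 < b := by positivity
  have hq : CC * ((c₄ + 4*C₁*μ₀) * s / D) + CC / D + b = a / D + b := by
    rw [ha_def]; field_simp
  have haγ : a ≤ γ * s := by
    have h1 : CC * 1 ≤ CC * (μ₀ * s) := by
      apply mul_le_mul_of_nonneg_left hα hCC.le
    rw [ha_def, hγ_def]
    have h2 : CC * (c₄ + (4 * C₁ + 1) * μ₀) * s = CC * (c₄ + 4 * C₁ * μ₀) * s + CC * (μ₀ * s) := by ring
    linarith
  have step1 : (a/D + b)^k ≤ (2*(a/D))^k + (2*b)^k := by
    rcases le_total (a/D) b with h | h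
    · have h1 : a/D + b ≤ 2*b := by linarith
      have h2 := pow_le_pow_left₀ (by positivity) h1 k
      have h3 : (0:ℝ) ≤ (2*(a/D))^k := by positivity
      linarith
    · have h1 : a/D + b ≤ 2*(a/D) := by linarith
      have h2 := pow_le_pow_left₀ (by positivity) h1 k
      have h3 : (0:ℝ) ≤ (2*b)^k := by positivity
      linarith
  have hsne : s ^ N ≠ 0 := pow_ne_zero _ hspos.ne'
  have hexp_l : (Real.exp (c₃ * N / l)) ^ l = Real.exp (c₃ * N) := by
    rw [← Real.exp_nat_mul]; congr 1; field_simp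
  have hsN : s ^ k * s ^ l = s ^ N := by rw [← pow_add, hkl]
  have hT1 : (CC*D/s)^N * (2*(a/D))^k ≤ Real.exp (-2*(N:ℝ)) := by
    have e1 : (CC*D/s)^N * (2*(a/D))^k = CC^N * (2*a)^k * D^l / s^N := by
      have hDN : D ^ N = D ^ k * D ^ l := by rw [← pow_add, hkl]
      field_simp
      rw [div_pow, div_pow, mul_pow CC D N, hDN]; field_simp
    rw [e1]
    have e2 : CC^N * (2*a)^k * D^l / s^N
        ≤ CC^N * (2*(γ*s))^k * (c₃ * s * Real.exp (c₃ * N / l))^l / s^N := by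
      gcongr <;> first | exact hDle | linarith
    have e3 : CC^N * (2*(γ*s))^k * (c₃ * s * Real.exp (c₃ * N / l))^l / s^N
        = CC^N * (2*γ)^k * c₃^l * Real.exp (c₃ * N) := by
      have f1 : (2*(γ*s))^k = (2*γ)^k * s^k := by rw [← mul_pow]; congr 1; ring
      have f2 : (c₃ * s * Real.exp (c₃ * N / l))^l = c₃^l * s^l * Real.exp (c₃ * N) := by
        rw [mul_pow, mul_pow, hexp_l]
      rw [f1, f2, div_eq_iff hsne, ← hsN]; ring
    have g1 : (2*γ)^k ≤ ((2*γ) ^ (1-β)) ^ N := by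
      have h1 : (2*γ)^k = (2*γ) ^ ((k:ℝ)) := by rw [Real.rpow_natCast]
      have h2 : ((2*γ) ^ (1-β)) ^ N = (2*γ) ^ ((1-β) * N) := by
        rw [← Real.rpow_natCast ((2*γ) ^ (1-β)) N, ← Real.rpow_mul (by positivity)]
      rw [h1, h2]
      apply Real.rpow_le_rpow_of_exponent_ge (by positivity) hγ1
      rw [hkcast]
      have h : (1-β) * (N:ℝ) = N - β*N := by ring
      linarith
    have g2 : c₃^l ≤ 1 := pow_le_one₀ hc₃0.le hc₃1
    have e4 : CC^N * (2*γ)^k * c₃^l * Real.exp (c₃ * N)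
        ≤ CC^N * ((2*γ) ^ (1-β)) ^ N * 1 * Real.exp (c₃ * N) := by
      apply mul_le_mul_of_nonneg_right _ (Real.exp_pos _).le
      apply mul_le_mul (mul_le_mul_of_nonneg_left g1 (by positivity)) g2 (by positivity)
        (by positivity)
    have e5 : CC^N * ((2*γ) ^ (1-β)) ^ N * 1 * Real.exp (c₃ * N)
        = (CC * (2*γ) ^ (1-β) * Real.exp c₃) ^ N := by
      rw [mul_one, show Real.exp (c₃ * N) = (Real.exp c₃)^N from by
        rw [← Real.exp_nat_mul, mul_comm], ← mul_pow, ← mul_pow]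
    have e6 : (CC * (2*γ) ^ (1-β) * Real.exp c₃) ^ N ≤ (Real.exp (-2)) ^ N := by
      apply pow_le_pow_left₀ (by positivity)
      calc CC * (2*γ) ^ (1-β) * Real.exp c₃ ≤ Real.exp (-3) * Real.exp 1 := by
            apply mul_le_mul hγ2 (Real.exp_le_exp.2 hc₃1) (Real.exp_pos _).le (Real.exp_pos _).le
        _ = Real.exp (-2) := by rw [← Real.exp_add]; norm_num
    have e7 : (Real.exp (-2:ℝ)) ^ N = Real.exp (-2 * (N:ℝ)) := by
      rw [← Real.exp_nat_mul, show ((N:ℝ)) * (-2) = -2 * (N:ℝ) from mul_comm _ _]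
    calc CC^N * (2*a)^k * D^l / s^N ≤ _ := e2
      _ = _ := e3
      _ ≤ _ := e4
      _ = _ := e5
      _ ≤ _ := e6
      _ = _ := e7
  have hT2 : (CC*D/s)^N * (2*b)^k ≤ Real.exp (-2*(N:ℝ)) := by
    set K := max (2*CC) 1 with hK_def
    have hK1 : (1:ℝ) ≤ K := le_max_right _ _
    have h1 : CC*D/s ≤ CC * c₃ * Real.exp (c₃ * N / l) := by
      rw [div_le_iff₀ hspos]
      calc CC * D ≤ CC * (c₃ * s * Real.exp (c₃ * N / l)) := by gcongr
        _ = CC * c₃ * Real.exp (c₃ * N / l) * s := by ring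
    have h2 : (CC*D/s)^N ≤ (CC*c₃)^N * Real.exp (c₃ * N * N / l) := by
      calc (CC*D/s)^N ≤ (CC * c₃ * Real.exp (c₃ * N / l))^N :=
            pow_le_pow_left₀ (by positivity) h1 N
        _ = (CC*c₃)^N * Real.exp (c₃ * N * N / l) := by
            rw [mul_pow, ← Real.exp_nat_mul, show ((N:ℝ)) * (c₃ * N / l) = c₃ * N * N / l from by
              ring]
    have h3 : (2*b)^k = (2*CC)^k * Real.exp (-(cc * (μ₀*s)^2) * k) := by
      rw [hb_def, show 2 * (CC * Real.exp (-cc * (μ₀ * s) ^ 2)) = 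
        (2*CC) * Real.exp (-(cc * (μ₀ * s) ^ 2)) by ring_nf, mul_pow, ← Real.exp_nat_mul,
        show ((k:ℝ)) * (-(cc * (μ₀ * s) ^ 2)) = -(cc * (μ₀ * s) ^ 2) * (k:ℝ) from mul_comm _ _]
    have h4 : (2*CC)^k ≤ K^N := by
      calc (2*CC)^k ≤ K^k := pow_le_pow_left₀ (by positivity) (le_max_left _ _) k
        _ ≤ K^N := pow_le_pow_right₀ hK1 (Nat.sub_le N l)
    have hμs : (μ₀*s)^2 = μ₀^2 * N := by rw [mul_pow]; rw [sq s, hss]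
    have h5 : Real.exp (c₃ * N * N / l) * Real.exp (-(cc * (μ₀*s)^2) * k) ≤ 1 := by
      rw [← Real.exp_add]
      apply Real.exp_le_one_iff.2
      have d1 : c₃ * N * N / l ≤ c₃ * N * N := by
        apply div_le_self (by positivity) (by exact_mod_cast hl1)
      have d2 : (1-β) * N ≤ (k:ℝ) := by
        rw [hkcast]
        have h : (1-β) * (N:ℝ) = N - β*N := by ring
        linarith
      rw [hμs]
      have hint1 := mul_le_mul_of_nonneg_right hc₃c (mul_nonneg hNpos.le hNpos.le)
      have hint2 := mul_le_mul_of_nonneg_left d2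
        (mul_pos (mul_pos hcc (by positivity : (0:ℝ) < μ₀^2)) hNpos).le
      linarith
    calc (CC*D/s)^N * (2*b)^k
        = (CC*D/s)^N * ((2*CC)^k * Real.exp (-(cc * (μ₀*s)^2) * k)) := by rw [h3]
      _ ≤ ((CC*c₃)^N * Real.exp (c₃ * N * N / l)) * (K^N * Real.exp (-(cc * (μ₀*s)^2) * k)) := by
          apply mul_le_mul h2 (mul_le_mul_of_nonneg_right h4 (Real.exp_pos _).le)
            (by positivity) (by positivity)
      _ = (CC*c₃*K)^N * (Real.exp (c₃ * N * N / l) * Real.exp (-(cc * (μ₀*s)^2) * k)) := by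
          rw [mul_pow]; ring
      _ ≤ (CC*c₃*K)^N * 1 := by
          apply mul_le_mul_of_nonneg_left h5 (by positivity)
      _ ≤ (Real.exp (-2:ℝ))^N * 1 := by
          apply mul_le_mul_of_nonneg_right _ (by norm_num)
          apply pow_le_pow_left₀ (by positivity)
          calc CC*c₃*K = c₃ * (CC * K) := by ring
            _ ≤ Real.exp (-2) := hc₃d
      _ = Real.exp (-2*(N:ℝ)) := by
          rw [mul_one, ← Real.exp_nat_mul, show ((N:ℝ)) * (-2) = -2 * (N:ℝ) from mul_comm _ _]
  have hfinal : Real.exp (-2*(N:ℝ)) + Real.exp (-2*(N:ℝ)) ≤ Real.exp (-(N:ℝ)) := by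
    have h1 : Real.exp (-(N:ℝ)) ≤ 1/2 := by
      have h2 : (2:ℝ) ≤ Real.exp 1 := by linarith [Real.add_one_le_exp 1]
      have h3 : Real.exp (-(N:ℝ)) ≤ Real.exp (-1) := Real.exp_le_exp.2 (by linarith)
      have h4 : Real.exp (-1:ℝ) = (Real.exp 1)⁻¹ := Real.exp_neg 1
      have h5 : (Real.exp 1)⁻¹ ≤ (2:ℝ)⁻¹ := by
        apply inv_anti₀ (by norm_num) h2
      rw [h4] at h3; linarith
    have h6 : Real.exp (-2*(N:ℝ)) = Real.exp (-(N:ℝ)) * Real.exp (-(N:ℝ)) := by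
      rw [← Real.exp_add]; congr 1; ring
    have h7 := mul_le_mul_of_nonneg_left h1 (Real.exp_pos (-(N:ℝ))).le
    linarith
  calc (CC * D / s) ^ N * (CC * ((c₄ + 4*C₁*μ₀) * s / D) + CC / D + b) ^ k
      = (CC*D/s)^N * (a/D + b)^k := by rw [hq]
    _ ≤ (CC*D/s)^N * ((2*(a/D))^k + (2*b)^k) := by
        apply mul_le_mul_of_nonneg_left step1 (by positivity)
    _ = (CC*D/s)^N * (2*(a/D))^k + (CC*D/s)^N * (2*b)^k := by ring
    _ ≤ Real.exp (-2*(N:ℝ)) + Real.exp (-2*(N:ℝ)) := add_le_add hT1 hT2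
    _ ≤ Real.exp (-(N:ℝ)) := hfinal


set_option maxHeartbeats 1000000 in
/-- Uniform lower bound `≈ N/D` for `‖(Ỹ^T − B̃)x‖₂` over the level set `S_D`, given the
single-vector small ball bound and a small net for `S_D`. -/
theorem stmt17 (CC cc C₁ β : ℝ) (hCC : 0 < CC) (hcc : 0 < cc) (hC₁ : 0 < C₁)
    (hβ : β ∈ Set.Ioo (0:ℝ) 1) :
    ∃ c₃ c₄ μ₀ : ℝ, c₃ ∈ Set.Ioo (0:ℝ) 1 ∧ c₄ ∈ Set.Ioo (0:ℝ) 1 ∧ μ₀ ∈ Set.Ioo (0:ℝ) 1 ∧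
      ∀ (Ω : Type) (_ : MeasurableSpace Ω) (μ : Measure Ω), IsProbabilityMeasure μ →
      ∀ (N M l : ℕ) (P : Matrix (Fin N) (Fin M) ℝ) (δ ρ α c D : ℝ)
        (Z : Ω → Matrix (Fin (N - l)) (Fin M) ℝ),
        δ ∈ Set.Ioo (0:ℝ) 1 → ρ ∈ Set.Ioo (0:ℝ) 1 → c ∈ Set.Ioo (0:ℝ) 1 →
        1 ≤ l → (l : ℝ) ≤ β * N → 0 < D →
        (∀ ω, opNormM (Z ω) ≤ C₁ * Real.sqrt N) →
        (∀ x ∈ levelSet M N P α c δ ρ D, ∀ t : ℝ, 0 < t →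
          (μ {ω | ‖mulVecE (Z ω) x‖ < t * Real.sqrt N}).toReal ≤
            (CC * t + CC / D + CC * Real.exp (-cc * α ^ 2)) ^ (N - l)) →
        (∃ 𝒩 : Finset (EucSp M),
          (↑𝒩 : Set (EucSp M)) ⊆ levelSet M N P α c δ ρ D ∧
          (∀ x ∈ levelSet M N P α c δ ρ D, ∃ y ∈ 𝒩, dist x y ≤ 4 * α / D) ∧
          (𝒩.card : ℝ) ≤ (CC * D / Real.sqrt N) ^ N) →
        α = μ₀ * Real.sqrt N → 1 ≤ α →
        D ≤ c₃ * Real.sqrt N * Real.exp (c₃ * N / l) →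
        (μ {ω | ∃ x ∈ levelSet M N P α c δ ρ D,
            ‖mulVecE (Z ω) x‖ < c₄ * N / D}).toReal ≤ Real.exp (-(N : ℝ)) := by
  obtain ⟨hβ0, hβ1⟩ := hβ
  have h1β : 0 < 1 - β := by linarith
  set η : ℝ := min 1 ((Real.exp (-3) / CC) ^ ((1:ℝ)/(1-β))) with hη_def
  have hη0 : 0 < η := lt_min one_pos (Real.rpow_pos_of_pos (by positivity) _)
  have hη1 : η ≤ 1 := min_le_left _ _
  have hη2 : η ≤ (Real.exp (-3) / CC) ^ ((1:ℝ)/(1-β)) := min_le_right _ _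
  set μ₀ : ℝ := min (1/2) (η / (8 * CC * (4*C₁+1))) with hμ_def
  set c₄ : ℝ := min (1/2) (η / (8 * CC)) with hc₄_def
  have hμ0 : 0 < μ₀ := lt_min (by norm_num) (by positivity)
  have hμh : μ₀ ≤ 1/2 := min_le_left _ _
  have hc₄0 : 0 < c₄ := lt_min (by norm_num) (by positivity)
  have hc₄h : c₄ ≤ 1/2 := min_le_left _ _
  have hA : CC * (4*C₁+1) * μ₀ ≤ η/8 := by
    have h := min_le_right (1/2:ℝ) (η / (8 * CC * (4*C₁+1)))
    calc CC * (4*C₁+1) * μ₀ ≤ CC * (4*C₁+1) * (η / (8 * CC * (4*C₁+1))) := by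
          apply mul_le_mul_of_nonneg_left h (by positivity)
      _ = η/8 := by field_simp
  have hB : CC * c₄ ≤ η/8 := by
    have h := min_le_right (1/2:ℝ) (η / (8 * CC))
    calc CC * c₄ ≤ CC * (η / (8 * CC)) := by
          apply mul_le_mul_of_nonneg_left h hCC.le
      _ = η/8 := by field_simp
  have hγ1 : 2 * (CC * (c₄ + (4*C₁+1) * μ₀)) ≤ 1 := by
    have h : CC * (c₄ + (4*C₁+1) * μ₀) = CC * c₄ + CC * (4*C₁+1) * μ₀ := by ring
    linarith
  have hγη : 2 * (CC * (c₄ + (4*C₁+1) * μ₀)) ≤ η := by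
    have h : CC * (c₄ + (4*C₁+1) * μ₀) = CC * c₄ + CC * (4*C₁+1) * μ₀ := by ring
    linarith
  have hγ2 : CC * (2 * (CC * (c₄ + (4*C₁+1) * μ₀))) ^ (1-β) ≤ Real.exp (-3) := by
    have hg0 : (0:ℝ) ≤ 2 * (CC * (c₄ + (4*C₁+1) * μ₀)) := by positivity
    have h1 : (2 * (CC * (c₄ + (4*C₁+1) * μ₀))) ^ (1-β) ≤ η ^ (1-β) :=
      Real.rpow_le_rpow hg0 hγη h1β.le
    have h2 : η ^ (1-β) ≤ ((Real.exp (-3) / CC) ^ ((1:ℝ)/(1-β))) ^ (1-β) :=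
      Real.rpow_le_rpow hη0.le hη2 h1β.le
    have h3 : ((Real.exp (-3) / CC) ^ ((1:ℝ)/(1-β))) ^ (1-β) = Real.exp (-3) / CC := by
      rw [← Real.rpow_mul (by positivity), one_div, inv_mul_cancel₀ h1β.ne', Real.rpow_one]
    have h4 : (2 * (CC * (c₄ + (4*C₁+1) * μ₀))) ^ (1-β) ≤ Real.exp (-3) / CC := by
      rw [← h3]; exact le_trans h1 h2
    calc CC * (2 * (CC * (c₄ + (4*C₁+1) * μ₀))) ^ (1-β) ≤ CC * (Real.exp (-3) / CC) :=
          mul_le_mul_of_nonneg_left h4 hCC.le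
      _ = Real.exp (-3) := by field_simp
  have hKpos : (0:ℝ) < max (2*CC) 1 := lt_of_lt_of_le one_pos (le_max_right _ _)
  set c₃ : ℝ := min (min (1/2) (cc * μ₀^2 * (1-β))) (Real.exp (-2) / (CC * max (2*CC) 1))
    with hc₃_def
  have hc₃0 : 0 < c₃ :=
    lt_min (lt_min (by norm_num) (by positivity)) (div_pos (Real.exp_pos _) (by positivity))
  have hc₃h : c₃ ≤ 1/2 := le_trans (min_le_left _ _) (min_le_left _ _)
  have hc₃1 : c₃ ≤ 1 := by linarith
  have hc₃c : c₃ ≤ cc * μ₀^2 * (1-β) := le_trans (min_le_left _ _) (min_le_right _ _)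
  have hc₃d : c₃ * (CC * max (2*CC) 1) ≤ Real.exp (-2) := by
    have h := min_le_right (min (1/2) (cc * μ₀^2 * (1-β))) (Real.exp (-2) / (CC * max (2*CC) 1))
    rw [← le_div_iff₀ (by positivity)]
    exact h
  refine ⟨c₃, c₄, μ₀, ⟨hc₃0, by linarith⟩, ⟨hc₄0, by linarith⟩, ⟨hμ0, by linarith⟩, ?_⟩
  intro Ω _ μ hprob N M l P δ ρ α c D Z hδ hρ hc hl1 hlN hD hop hball hnet hαdef hα1 hDle
  subst hαdef
  obtain ⟨𝒩, hsub, hcov, hcard⟩ := hnet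
  have hsnn : (0:ℝ) ≤ Real.sqrt N := Real.sqrt_nonneg N
  have hs2 : 2 ≤ Real.sqrt N := by
    have h := mul_le_mul_of_nonneg_right hμh hsnn
    linarith
  have hspos : (0:ℝ) < Real.sqrt N := by linarith
  have hss : Real.sqrt N * Real.sqrt N = (N:ℝ) := Real.mul_self_sqrt (Nat.cast_nonneg N)
  set t : ℝ := (c₄ + 4*C₁*μ₀) * Real.sqrt N / D with ht_def
  have ht : 0 < t := by positivity
  set q : ℝ := CC * t + CC / D + CC * Real.exp (-cc * (μ₀ * Real.sqrt N) ^ 2) with hq_def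
  have hq0 : 0 ≤ q := by positivity
  have hincl : {ω | ∃ x ∈ levelSet M N P (μ₀ * Real.sqrt N) c δ ρ D,
      ‖mulVecE (Z ω) x‖ < c₄ * N / D}
      ⊆ ⋃ y ∈ 𝒩, {ω | ‖mulVecE (Z ω) y‖ < t * Real.sqrt N} := by
    rintro ω ⟨x, hx, hxlt⟩
    obtain ⟨y, hy, hdxy⟩ := hcov x hx
    refine Set.mem_iUnion₂.2 ⟨y, hy, ?_⟩
    have hsplit : mulVecE (Z ω) y = mulVecE (Z ω) x + mulVecE (Z ω) (y - x) := by
      show WithLp.toLp 2 ((Z ω).mulVec y.ofLp) = WithLp.toLp 2 ((Z ω).mulVec x.ofLp + (Z ω).mulVec (y.ofLp - x.ofLp))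
      rw [Matrix.mulVec_sub]
      congr 1
      abel
    have h1 : ‖mulVecE (Z ω) (y - x)‖ ≤ C₁ * Real.sqrt N * ‖y - x‖ :=
      le_trans (mulVecE_norm_le (Z ω) (y - x))
        (mul_le_mul_of_nonneg_right (hop ω) (norm_nonneg _))
    have h2 : ‖y - x‖ ≤ 4 * (μ₀ * Real.sqrt N) / D := by
      rw [← dist_eq_norm, dist_comm]
      exact hdxy
    have h3 : ‖mulVecE (Z ω) (y - x)‖ ≤ C₁ * Real.sqrt N * (4 * (μ₀ * Real.sqrt N) / D) :=
      le_trans h1 (mul_le_mul_of_nonneg_left h2 (by positivity))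
    show ‖mulVecE (Z ω) y‖ < t * Real.sqrt N
    have h4 : ‖mulVecE (Z ω) y‖ ≤ ‖mulVecE (Z ω) x‖ + ‖mulVecE (Z ω) (y - x)‖ := by
      rw [hsplit]; exact norm_add_le _ _
    have h5 : t * Real.sqrt N = c₄ * N / D + C₁ * Real.sqrt N * (4 * (μ₀ * Real.sqrt N) / D) := by
      rw [ht_def]
      field_simp
      ring_nf
      nlinarith [hss]
    linarith
  have key := estimate17 CC cc C₁ β c₃ c₄ μ₀ N l D hCC hcc hC₁ hβ0 hβ1 hμ0 hμh hc₄0 hγ1 hγ2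
    hc₃0 hc₃1 hc₃c hc₃d hl1 hlN hD hDle hα1
  have hsum_ne : (∑ y ∈ 𝒩, μ {ω | ‖mulVecE (Z ω) y‖ < t * Real.sqrt N}) ≠ ⊤ :=
    ENNReal.sum_ne_top.2 fun y _ => measure_ne_top μ _
  calc (μ {ω | ∃ x ∈ levelSet M N P (μ₀ * Real.sqrt N) c δ ρ D,
        ‖mulVecE (Z ω) x‖ < c₄ * N / D}).toReal
      ≤ (∑ y ∈ 𝒩, μ {ω | ‖mulVecE (Z ω) y‖ < t * Real.sqrt N}).toReal :=
        ENNReal.toReal_mono hsum_ne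
          (le_trans (measure_mono hincl) (measure_biUnion_finset_le 𝒩 _))
    _ = ∑ y ∈ 𝒩, (μ {ω | ‖mulVecE (Z ω) y‖ < t * Real.sqrt N}).toReal :=
        ENNReal.toReal_sum fun y _ => measure_ne_top μ _
    _ ≤ ∑ y ∈ 𝒩, q ^ (N - l) :=
        Finset.sum_le_sum fun y hy => hball y (hsub hy) t ht
    _ = (𝒩.card : ℝ) * q ^ (N - l) := by
        rw [Finset.sum_const, nsmul_eq_mul]
    _ ≤ (CC * D / Real.sqrt N) ^ N * q ^ (N - l) :=
        mul_le_mul_of_nonneg_right hcard (by positivity)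
    _ ≤ Real.exp (-(N:ℝ)) := key
end
end
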